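/- arXiv:1007.4695 — 9 statements merged into one kernel-verified Lean document; each statement's English description precedes it below -/
import Mathlib

section
/- Let ḡ := m + [m,m]. Then ḡ is an ideal of g, and there exists a unique symmetric bilinear form Q on ḡ such that: Q is invariant, i.e. Q([u,v],w) + Q(v,[u,w]) = 0 for all u,v,w ∈ ḡ; Q(h ∩ ḡ, m) = 0; and Q restricted to m × m equals ⟨,⟩. Moreover this Q is nondegenerate on ḡ (in particular its restriction to h ∩ ḡ is nondegenerate). -/
set_option maxHeartbeats 1000000
set_option synthInstance.maxHeartbeats 400000

open scoped TensorProduct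

/-- `gbar g m = m + [m,m]`, the submodule of `g` spanned by `m` together with all
brackets of elements of `m`. -/
def gbar (g : Type) [LieRing g] [LieAlgebra ℝ g] (m : Submodule ℝ g) : Submodule ℝ g :=
  m ⊔ Submodule.span ℝ {z | ∃ x ∈ m, ∃ y ∈ m, z = ⁅x, y⁆}

/-- Kostant's theorem, pseudo-Riemannian version (Theorem 2.2, first part):
`ḡ = m + [m,m]` is an ideal of `g` and there is a unique symmetric invariant
bilinear form `Q` on `ḡ` with `Q(h ∩ ḡ, m) = 0` and `Q|_{m×m} = ⟨,⟩`; moreover `Q`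
is nondegenerate on `ḡ` and on `h ∩ ḡ`. -/
theorem kostant_pseudo_riemannian
    (g : Type) [LieRing g] [LieAlgebra ℝ g] [FiniteDimensional ℝ g]
    (h : LieSubalgebra ℝ g) (m : Submodule ℝ g)
    -- the action is almost effective: h contains no nonzero ideal of g
    (heff : ∀ I : LieIdeal ℝ g, (I : Submodule ℝ g) ≤ h.toSubmodule → I = ⊥)
    -- g = h ⊕ m as vector spaces
    (hcompl : IsCompl h.toSubmodule m)
    -- [h,m] ⊆ m
    (hred : ∀ a ∈ h, ∀ x ∈ m, ⁅a, x⁆ ∈ m)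
    -- projections onto the h- and m-components
    (ph pm : g →ₗ[ℝ] g)
    (hph : ∀ x, ph x ∈ h.toSubmodule) (hpm : ∀ x, pm x ∈ m)
    (hdecomp : ∀ x, ph x + pm x = x)
    -- the metric ⟨,⟩ on m
    (B : LinearMap.BilinForm ℝ g)
    (hBsymm : ∀ x ∈ m, ∀ y ∈ m, B x y = B y x)
    (hBnd : ∀ x ∈ m, (∀ y ∈ m, B x y = 0) → x = 0)
    -- Ad(H)-invariance (infinitesimally): ⟨[a,y],z⟩ + ⟨y,[a,z]⟩ = 0 for a ∈ h
    (hinv : ∀ a ∈ h, ∀ y ∈ m, ∀ z ∈ m, B ⁅a, y⁆ z + B y ⁅a, z⁆ = 0)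
    -- natural reductivity: ⟨[x,y]_m,z⟩ + ⟨y,[x,z]_m⟩ = 0 for x,y,z ∈ m
    (hnr : ∀ x ∈ m, ∀ y ∈ m, ∀ z ∈ m, B (pm ⁅x, y⁆) z + B y (pm ⁅x, z⁆) = 0) :
    -- ḡ is an ideal of g
    (∀ x : g, ∀ y ∈ gbar g m, ⁅x, y⁆ ∈ gbar g m) ∧
    -- existence of Q ...
    ∃ Q : LinearMap.BilinForm ℝ g,
      ((∀ u ∈ gbar g m, ∀ v ∈ gbar g m, Q u v = Q v u) ∧
       (∀ u ∈ gbar g m, ∀ v ∈ gbar g m, ∀ w ∈ gbar g m, Q ⁅u, v⁆ w + Q v ⁅u, w⁆ = 0) ∧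
       (∀ a ∈ h.toSubmodule ⊓ gbar g m, ∀ x ∈ m, Q a x = 0) ∧
       (∀ x ∈ m, ∀ y ∈ m, Q x y = B x y)) ∧
      -- ... which is nondegenerate on ḡ,
      (∀ u ∈ gbar g m, (∀ v ∈ gbar g m, Q u v = 0) → u = 0) ∧
      -- in particular nondegenerate on h ∩ ḡ,
      (∀ a ∈ h.toSubmodule ⊓ gbar g m,
        (∀ b ∈ h.toSubmodule ⊓ gbar g m, Q a b = 0) → a = 0) ∧
      -- ... and unique (as a form on ḡ) with these properties.
      (∀ Q' : LinearMap.BilinForm ℝ g,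
        ((∀ u ∈ gbar g m, ∀ v ∈ gbar g m, Q' u v = Q' v u) ∧
         (∀ u ∈ gbar g m, ∀ v ∈ gbar g m, ∀ w ∈ gbar g m, Q' ⁅u, v⁆ w + Q' v ⁅u, w⁆ = 0) ∧
         (∀ a ∈ h.toSubmodule ⊓ gbar g m, ∀ x ∈ m, Q' a x = 0) ∧
         (∀ x ∈ m, ∀ y ∈ m, Q' x y = B x y)) →
        ∀ u ∈ gbar g m, ∀ v ∈ gbar g m, Q' u v = Q u v) := by
  classical
  -- ## basic membership facts
  have hmG : m ≤ gbar g m := le_sup_left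
  have hSG : Submodule.span ℝ {z | ∃ x ∈ m, ∃ y ∈ m, z = ⁅x, y⁆} ≤ gbar g m := le_sup_right
  have hbrG : ∀ x ∈ m, ∀ y ∈ m, ⁅x, y⁆ ∈ gbar g m := fun x hx y hy =>
    hSG (Submodule.subset_span ⟨x, hx, y, hy, rfl⟩)
  -- ## projection facts
  have hph0 : ∀ x ∈ m, ph x = 0 := by
    intro x hx
    refine Submodule.disjoint_def.mp hcompl.disjoint _ (hph x) ?_
    have e : ph x = x - pm x := eq_sub_of_add_eq (hdecomp x)
    rw [e]; exact m.sub_mem hx (hpm x)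
  have hpm_id : ∀ x ∈ m, pm x = x := by
    intro x hx
    have e := hdecomp x
    rw [hph0 x hx, zero_add] at e
    exact e
  have hpm0 : ∀ a ∈ h.toSubmodule, pm a = 0 := by
    intro a ha
    refine Submodule.disjoint_def.mp hcompl.disjoint _ ?_ (hpm a)
    have e : pm a = a - ph a := by
      rw [eq_sub_iff_add_eq, add_comm]; exact hdecomp a
    rw [e]; exact Submodule.sub_mem _ ha (hph a)
  have hph_id : ∀ a ∈ h.toSubmodule, ph a = a := by
    intro a ha
    have e := hdecomp a
    rw [hpm0 a ha, add_zero] at e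
    exact e
  have hred' : ∀ a ∈ h.toSubmodule, ∀ x ∈ m, ⁅a, x⁆ ∈ m := by
    intro a ha x hx
    exact hred a ((LieSubalgebra.mem_toSubmodule h).mp ha) x hx
  have hinv' : ∀ a ∈ h.toSubmodule, ∀ y ∈ m, ∀ z ∈ m, B ⁅a, y⁆ z + B y ⁅a, z⁆ = 0 := by
    intro a ha
    exact hinv a ((LieSubalgebra.mem_toSubmodule h).mp ha)
  -- right multiplication linear map
  let rmul : g → (g →ₗ[ℝ] g) := fun x =>
    { toFun := fun b => ⁅b, x⁆
      map_add' := by intro a b; simp [add_lie]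
      map_smul' := by intro c a; simp [smul_lie] }
  -- ## the ideal property
  have hstepA : ∀ v ∈ gbar g m, ∀ x ∈ m, ⁅v, x⁆ ∈ gbar g m := by
    intro v hv x hx
    have hle : gbar g m ≤ Submodule.comap (rmul x) (gbar g m) := by
      apply sup_le
      · intro y hy
        simpa [rmul] using hbrG y hy x hx
      · rw [Submodule.span_le]
        rintro _ ⟨z, hz, w, hw, rfl⟩
        have e : ⁅(⁅z, w⁆ : g), x⁆ = ⁅ph ⁅z, w⁆, x⁆ + ⁅pm ⁅z, w⁆, x⁆ := by
          rw [← add_lie, hdecomp]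
        have h1 : ⁅ph ⁅z, w⁆, x⁆ ∈ gbar g m := hmG (hred' _ (hph _) x hx)
        have h2 : ⁅pm ⁅z, w⁆, x⁆ ∈ gbar g m := hbrG _ (hpm _) x hx
        have : ⁅(⁅z, w⁆ : g), x⁆ ∈ gbar g m := by rw [e]; exact add_mem h1 h2
        simpa [rmul] using this
    simpa [rmul] using hle hv
  have hstep1 : ∀ u : g, ∀ x ∈ m, ⁅u, x⁆ ∈ gbar g m := by
    intro u x hx
    have e : ⁅u, x⁆ = ⁅ph u, x⁆ + ⁅pm u, x⁆ := by rw [← add_lie, hdecomp]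
    rw [e]
    exact add_mem (hmG (hred' _ (hph u) x hx)) (hbrG _ (hpm u) x hx)
  have idl : ∀ u : g, ∀ y ∈ gbar g m, ⁅u, y⁆ ∈ gbar g m := by
    intro u y hy
    have hle : gbar g m ≤ Submodule.comap (LieAlgebra.ad ℝ g u) (gbar g m) := by
      apply sup_le
      · intro x hx
        simpa [LieAlgebra.ad_apply] using hstep1 u x hx
      · rw [Submodule.span_le]
        rintro _ ⟨z, hz, w, hw, rfl⟩
        have e : ⁅u, ⁅z, w⁆⁆ = ⁅⁅u, z⁆, w⁆ + ⁅z, ⁅u, w⁆⁆ := (leibniz_lie u z w)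
        have h1 : ⁅⁅u, z⁆, w⁆ ∈ gbar g m := hstepA _ (hstep1 u z hz) w hw
        have h2 : ⁅z, ⁅u, w⁆⁆ ∈ gbar g m := by
          have h3 : ⁅(⁅u, w⁆ : g), z⁆ ∈ gbar g m := hstepA _ (hstep1 u w hw) z hz
          have e2 : ⁅z, (⁅u, w⁆ : g)⁆ = -⁅(⁅u, w⁆ : g), z⁆ := (lie_skew _ _).symm
          rw [e2]; exact neg_mem h3
        have : ⁅u, ⁅z, w⁆⁆ ∈ gbar g m := by rw [e]; exact add_mem h1 h2
        simpa [LieAlgebra.ad_apply] using this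
    simpa [LieAlgebra.ad_apply] using hle hy
  -- ## the key algebraic identity
  have hA : ∀ a ∈ h.toSubmodule, ∀ u ∈ m, ∀ v ∈ m, B v ⁅a, u⁆ = - B u ⁅a, v⁆ := by
    intro a ha u hu v hv
    have h1 := hinv' a ha u hu v hv
    have h2 := hBsymm ⁅a, u⁆ (hred' a ha u hu) v hv
    linarith
  have hR : ∀ x ∈ m, ∀ y ∈ m, ∀ z ∈ m, ∀ w ∈ m,
      B y ⁅ph ⁅z, w⁆, x⁆ = B z ⁅ph ⁅w, x⁆, y⁆ - B w ⁅ph ⁅z, x⁆, y⁆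
        - B (pm ⁅z, y⁆) (pm ⁅w, x⁆) + B (pm ⁅w, y⁆) (pm ⁅z, x⁆)
        - B (pm ⁅x, y⁆) (pm ⁅z, w⁆) := by
    intro x hx y hy z hz w hw
    have s0 : ⁅ph ⁅z, w⁆, x⁆ = pm ⁅(⁅z, w⁆ : g), x⁆ - pm ⁅pm ⁅z, w⁆, x⁆ := by
      have e1 : ⁅(⁅z, w⁆ : g), x⁆ = ⁅ph ⁅z, w⁆, x⁆ + ⁅pm ⁅z, w⁆, x⁆ := by
        rw [← add_lie, hdecomp]
      have e2 : pm ⁅(⁅z, w⁆ : g), x⁆ = pm ⁅ph ⁅z, w⁆, x⁆ + pm ⁅pm ⁅z, w⁆, x⁆ := by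
        rw [e1, map_add]
      have e3 : pm ⁅ph ⁅z, w⁆, x⁆ = ⁅ph ⁅z, w⁆, x⁆ := hpm_id _ (hred' _ (hph _) x hx)
      rw [e3] at e2
      exact eq_sub_of_add_eq e2.symm
    have s2 : pm ⁅(⁅z, w⁆ : g), x⁆ = pm ⁅z, ⁅w, x⁆⁆ - pm ⁅w, ⁅z, x⁆⁆ := by
      rw [lie_lie, map_sub]
    have s3 : ∀ p q r : g, p ∈ m → pm ⁅p, ⁅q, r⁆⁆ = -⁅ph ⁅q, r⁆, p⁆ + pm ⁅p, pm ⁅q, r⁆⁆ := by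
      intro p q r hp
      have e1 : ⁅p, (⁅q, r⁆ : g)⁆ = ⁅p, ph ⁅q, r⁆⁆ + ⁅p, pm ⁅q, r⁆⁆ := by
        rw [← lie_add, hdecomp]
      have e2 : ⁅p, ph ⁅q, r⁆⁆ = -⁅ph ⁅q, r⁆, p⁆ := (lie_skew p (ph ⁅q, r⁆)).symm
      have e3 : pm ⁅ph ⁅q, r⁆, p⁆ = ⁅ph ⁅q, r⁆, p⁆ := hpm_id _ (hred' _ (hph _) p hp)
      rw [e1, e2, map_add, map_neg, e3]
    have t1 : B y (pm ⁅z, ⁅w, x⁆⁆) = B z ⁅ph ⁅w, x⁆, y⁆ - B (pm ⁅z, y⁆) (pm ⁅w, x⁆) := by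
      rw [s3 z w x hz]
      simp only [map_add, map_neg]
      have hAq : B y ⁅ph ⁅w, x⁆, z⁆ = -B z ⁅ph ⁅w, x⁆, y⁆ := hA _ (hph _) z hz y hy
      have hnr1 : B (pm ⁅z, y⁆) (pm ⁅w, x⁆) + B y (pm ⁅z, pm ⁅w, x⁆⁆) = 0 :=
        hnr z hz y hy _ (hpm _)
      linarith
    have t2 : B y (pm ⁅w, ⁅z, x⁆⁆) = B w ⁅ph ⁅z, x⁆, y⁆ - B (pm ⁅w, y⁆) (pm ⁅z, x⁆) := by
      rw [s3 w z x hw]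
      simp only [map_add, map_neg]
      have hAq : B y ⁅ph ⁅z, x⁆, w⁆ = -B w ⁅ph ⁅z, x⁆, y⁆ := hA _ (hph _) w hw y hy
      have hnr1 : B (pm ⁅w, y⁆) (pm ⁅z, x⁆) + B y (pm ⁅w, pm ⁅z, x⁆⁆) = 0 :=
        hnr w hw y hy _ (hpm _)
      linarith
    have t3 : B y (pm ⁅pm ⁅z, w⁆, x⁆) = B (pm ⁅x, y⁆) (pm ⁅z, w⁆) := by
      have e : ⁅pm ⁅z, w⁆, x⁆ = -⁅x, pm ⁅z, w⁆⁆ := (lie_skew (pm ⁅z, w⁆) x).symm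
      rw [e, map_neg, map_neg]
      have := hnr x hx y hy (pm ⁅z, w⁆) (hpm _)
      linarith
    have main : B y ⁅ph ⁅z, w⁆, x⁆
        = B y (pm ⁅(⁅z, w⁆ : g), x⁆) - B y (pm ⁅pm ⁅z, w⁆, x⁆) := by
      rw [s0, map_sub]
    have main2 : B y (pm ⁅(⁅z, w⁆ : g), x⁆)
        = B y (pm ⁅z, ⁅w, x⁆⁆) - B y (pm ⁅w, ⁅z, x⁆⁆) := by
      rw [s2, map_sub]
    linarith
  have hK : ∀ x ∈ m, ∀ y ∈ m, ∀ z ∈ m, ∀ w ∈ m,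
      B y ⁅ph ⁅z, w⁆, x⁆ = B w ⁅ph ⁅x, y⁆, z⁆ := by
    have hswap_in : ∀ a b u v : g, B a ⁅ph ⁅v, u⁆, b⁆ = -B a ⁅ph ⁅u, v⁆, b⁆ := by
      intro a b u v
      rw [show (⁅v, u⁆ : g) = -⁅u, v⁆ from (lie_skew v u).symm, map_neg, neg_lie, map_neg]
    have hGswap1 : ∀ u v c d : g, B (pm ⁅v, u⁆) (pm ⁅c, d⁆) = -B (pm ⁅u, v⁆) (pm ⁅c, d⁆) := by
      intro u v c d
      rw [show (⁅v, u⁆ : g) = -⁅u, v⁆ from (lie_skew v u).symm, map_neg,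
        LinearMap.map_neg₂]
    have hGswap2 : ∀ u v c d : g, B (pm ⁅u, v⁆) (pm ⁅d, c⁆) = -B (pm ⁅u, v⁆) (pm ⁅c, d⁆) := by
      intro u v c d
      rw [show (⁅d, c⁆ : g) = -⁅c, d⁆ from (lie_skew d c).symm, map_neg, map_neg]
    have hGsym : ∀ u v c d : g, B (pm ⁅u, v⁆) (pm ⁅c, d⁆) = B (pm ⁅c, d⁆) (pm ⁅u, v⁆) :=
      fun u v c d => hBsymm _ (hpm _) _ (hpm _)
    have houts : ∀ c d : g, ∀ u ∈ m, ∀ v ∈ m,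
        B u ⁅ph ⁅c, d⁆, v⁆ = -B v ⁅ph ⁅c, d⁆, u⁆ :=
      fun c d u hu v hv => hA _ (hph _) v hv u hu
    intro x hx y hy z hz w hw
    have R1 := hR x hx y hy z hz w hw
    have R2 := hR x hx z hz y hy w hw
    have R3 := hR x hx w hw y hy z hz
    have R4 := hR y hy x hx z hz w hw
    linarith [hswap_in z y x w, hswap_in w y x z, hswap_in y z x w,
      houts x w y hy z hz, hswap_in w z x y, hswap_in y w x z,
      houts x z y hy w hw, hswap_in z w x y, houts x y z hz w hw,
      houts z w x hx y hy, hswap_in z x y w, hswap_in w x y z,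
      hGswap1 y z w x, hGswap2 y z x w, hGsym y z x w,
      hGswap1 y w z x, hGswap2 y w x z, hGsym y w x z,
      hGswap1 z w y x, hGswap2 z w x y, hGsym z w x y,
      hGswap1 x z w y, hGswap2 x z y w,
      hGswap1 x w z y, hGswap2 x w y z,
      hGswap1 x y z w]
  -- ## construction of the extension machinery
  let Λb : (↥m) →ₗ[ℝ] (↥m) →ₗ[ℝ] g := LinearMap.mk₂ ℝ (fun x y => ph ⁅(x : g), (y : g)⁆)
      (by intros; simp [add_lie]) (by intros; simp [smul_lie]) (by intros; simp [lie_add])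
      (by intros; simp [lie_smul])
  let μb : (↥m) →ₗ[ℝ] (↥m) →ₗ[ℝ] (g →ₗ[ℝ] ℝ) := LinearMap.mk₂ ℝ
      (fun x y => (B (y : g)) ∘ₗ (rmul (x : g)))
      (by intro x x' y; ext b; simp [rmul, lie_add])
      (by intro c x y; ext b; simp [rmul, lie_smul])
      (by intro x y y'; ext b; simp [rmul])
      (by intro c x y; ext b; simp [rmul])
  let Λ : (↥m) ⊗[ℝ] (↥m) →ₗ[ℝ] g := TensorProduct.lift Λb
  let μ : (↥m) ⊗[ℝ] (↥m) →ₗ[ℝ] (g →ₗ[ℝ] ℝ) := TensorProduct.lift μb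
  have hΛ : ∀ (x y : ↥m), Λ (x ⊗ₜ y) = ph ⁅(x : g), (y : g)⁆ := by intros; simp [Λ, Λb]
  have hμ : ∀ (x y : ↥m) (b : g), μ (x ⊗ₜ y) b = B (y : g) ⁅b, (x : g)⁆ := by
    intros; simp [μ, μb, rmul]
  obtain ⟨N', hN'⟩ := Submodule.exists_isCompl (LinearMap.range Λ)
  obtain ⟨σ₀, hσ₀⟩ := LinearMap.exists_rightInverse_of_surjective
      (Λ.rangeRestrict) (LinearMap.range_rangeRestrict Λ)
  have hΛσ : ∀ a : LinearMap.range Λ, Λ (σ₀ a) = (a : g) := by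
    intro a
    have e := congrArg (fun f => f a) hσ₀
    simp only [LinearMap.comp_apply, LinearMap.id_apply] at e
    calc Λ (σ₀ a) = (Λ.rangeRestrict (σ₀ a) : g) := rfl
      _ = (a : g) := by rw [e]
  let p := Submodule.linearProjOfIsCompl _ _ hN'
  have hp : ∀ a : LinearMap.range Λ, p (a : g) = a :=
    fun a => Submodule.linearProjOfIsCompl_apply_left hN' a
  let F : LinearMap.BilinForm ℝ g := μ ∘ₗ (σ₀ ∘ₗ p)
  have hF : ∀ (a b : g), F a b = μ (σ₀ (p a)) b := fun a b => rfl
  -- range facts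
  have hNh : ∀ u ∈ LinearMap.range Λ, u ∈ h.toSubmodule := by
    rintro _ ⟨t, rfl⟩
    induction t using TensorProduct.induction_on with
    | zero => simp only [map_zero]; exact Submodule.zero_mem _
    | tmul x y => rw [hΛ]; exact hph _
    | add t1 t2 ih1 ih2 => rw [map_add]; exact Submodule.add_mem _ ih1 ih2
  have hNG : ∀ u ∈ LinearMap.range Λ, u ∈ gbar g m := by
    rintro _ ⟨t, rfl⟩
    induction t using TensorProduct.induction_on with
    | zero => simp only [map_zero]; exact Submodule.zero_mem _
    | tmul x y =>
        rw [hΛ]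
        have e : ph ⁅(x : g), (y : g)⁆ = ⁅(x : g), (y : g)⁆ - pm ⁅(x : g), (y : g)⁆ :=
          eq_sub_of_add_eq (hdecomp _)
        rw [e]
        exact Submodule.sub_mem _ (hbrG _ x.2 _ y.2) (hmG (hpm _))
    | add t1 t2 ih1 ih2 => rw [map_add]; exact Submodule.add_mem _ ih1 ih2
  have hphG : ∀ u ∈ gbar g m, ph u ∈ LinearMap.range Λ := by
    intro u hu
    have hle : gbar g m ≤ Submodule.comap ph (LinearMap.range Λ) := by
      apply sup_le
      · intro x hx
        simp only [Submodule.mem_comap, hph0 x hx]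
        exact Submodule.zero_mem _
      · rw [Submodule.span_le]
        rintro _ ⟨x, hx, y, hy, rfl⟩
        have : ph ⁅x, y⁆ ∈ LinearMap.range Λ := ⟨(⟨x, hx⟩ : ↥m) ⊗ₜ (⟨y, hy⟩ : ↥m), (hΛ _ _)⟩
        exact Submodule.mem_comap.mpr this
    exact hle hu
  -- the key symmetry in tensor form
  have hμΛsym : ∀ t s : (↥m) ⊗[ℝ] (↥m), μ t (Λ s) = μ s (Λ t) := by
    intro t s
    induction t using TensorProduct.induction_on with
    | zero => simp only [map_zero, LinearMap.zero_apply]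
    | tmul x y =>
        induction s using TensorProduct.induction_on with
        | zero => simp only [map_zero, LinearMap.zero_apply]
        | tmul z w =>
            rw [hμ, hμ, hΛ, hΛ]
            exact hK x.1 x.2 y.1 y.2 z.1 z.2 w.1 w.2
        | add s1 s2 ih1 ih2 =>
            simp only [map_add, LinearMap.add_apply, ih1, ih2]
    | add t1 t2 ih1 ih2 =>
        simp only [map_add, LinearMap.add_apply, ih1, ih2]
  have hFΛ : ∀ t : (↥m) ⊗[ℝ] (↥m), ∀ b ∈ LinearMap.range Λ, F (Λ t) b = μ t b := by
    intro t b hb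
    obtain ⟨s, rfl⟩ := hb
    rw [hF]
    have h1 : p (Λ t) = ⟨Λ t, ⟨t, rfl⟩⟩ := hp ⟨Λ t, ⟨t, rfl⟩⟩
    rw [h1, hμΛsym _ s, hΛσ ⟨Λ t, ⟨t, rfl⟩⟩, hμΛsym s t]
  have hFsymN : ∀ a ∈ LinearMap.range Λ, ∀ b ∈ LinearMap.range Λ, F a b = F b a := by
    rintro _ ⟨t, rfl⟩ b hb
    rw [hFΛ t b hb]
    obtain ⟨s, rfl⟩ := hb
    rw [hFΛ s _ ⟨t, rfl⟩, hμΛsym]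
  -- ## the form Q
  set Q : LinearMap.BilinForm ℝ g := B.compl₁₂ pm pm + F.compl₁₂ ph ph with hQdef
  have hQ : ∀ u v : g, Q u v = B (pm u) (pm v) + F (ph u) (ph v) := by
    intro u v
    simp [hQdef, LinearMap.compl₁₂_apply, LinearMap.add_apply]
  -- ## properties of Q
  have Qsym : ∀ u ∈ gbar g m, ∀ v ∈ gbar g m, Q u v = Q v u := by
    intro u hu v hv
    rw [hQ, hQ, hBsymm _ (hpm u) _ (hpm v), hFsymN _ (hphG u hu) _ (hphG v hv)]
  have Qhm : ∀ a ∈ h.toSubmodule, ∀ x ∈ m, Q a x = 0 := by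
    intro a ha x hx
    rw [hQ, hpm0 a ha, hph0 x hx]
    simp only [LinearMap.map_zero₂, map_zero, LinearMap.zero_apply, add_zero, zero_add]
  have Qmm : ∀ x ∈ m, ∀ y ∈ m, Q x y = B x y := by
    intro x hx y hy
    rw [hQ, hpm_id x hx, hpm_id y hy, hph0 x hx]
    simp only [LinearMap.map_zero₂, map_zero, LinearMap.zero_apply, add_zero, zero_add]
  -- invariance: the four basic cases for u ∈ m
  have c1 : ∀ x ∈ m, ∀ y ∈ m, ∀ z ∈ m, Q ⁅x, y⁆ z + Q y ⁅x, z⁆ = 0 := by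
    intro x hx y hy z hz
    rw [hQ, hQ, hph0 z hz, hph0 y hy, hpm_id z hz, hpm_id y hy]
    simp only [map_zero, LinearMap.map_zero₂, LinearMap.zero_apply, add_zero, zero_add]
    linarith [hnr x hx y hy z hz]
  have c2 : ∀ x ∈ m, ∀ y ∈ m, ∀ b ∈ LinearMap.range Λ, Q ⁅x, y⁆ b + Q y ⁅x, b⁆ = 0 := by
    intro x hx y hy b hb
    have hbh := hNh b hb
    have hbx : ⁅b, x⁆ ∈ m := hred' b hbh x hx
    have exb : ⁅x, b⁆ = -⁅b, x⁆ := (lie_skew x b).symm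
    have hxb_m : ⁅x, b⁆ ∈ m := by rw [exb]; exact neg_mem hbx
    rw [hQ, hQ, hpm0 b hbh, hph_id b hbh, hph0 y hy, hpm_id y hy,
      hpm_id _ hxb_m, hph0 _ hxb_m]
    have e3 : ph ⁅x, y⁆ = Λ ((⟨x, hx⟩ : ↥m) ⊗ₜ (⟨y, hy⟩ : ↥m)) := (hΛ ⟨x, hx⟩ ⟨y, hy⟩).symm
    rw [e3, hFΛ _ b hb, hμ, exb]
    simp only [map_zero, map_neg, LinearMap.map_zero₂, LinearMap.zero_apply, add_zero, zero_add]
    ring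
  have c3 : ∀ x ∈ m, ∀ a ∈ LinearMap.range Λ, ∀ z ∈ m, Q ⁅x, a⁆ z + Q a ⁅x, z⁆ = 0 := by
    intro x hx a ha z hz
    obtain ⟨t, rfl⟩ := ha
    have hah := hNh _ (⟨t, rfl⟩ : Λ t ∈ LinearMap.range Λ)
    have hax : ⁅Λ t, x⁆ ∈ m := hred' _ hah x hx
    have exa : ⁅x, Λ t⁆ = -⁅Λ t, x⁆ := (lie_skew x (Λ t)).symm
    have hxa_m : ⁅x, Λ t⁆ ∈ m := by rw [exa]; exact neg_mem hax
    rw [hQ, hQ, hpm_id _ hxa_m, hph0 _ hxa_m, hpm_id z hz, hph0 z hz,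
      hpm0 _ hah, hph_id _ hah]
    have e3 : ph ⁅x, z⁆ = Λ ((⟨x, hx⟩ : ↥m) ⊗ₜ (⟨z, hz⟩ : ↥m)) := (hΛ ⟨x, hx⟩ ⟨z, hz⟩).symm
    rw [e3, hFΛ t _ (⟨_, rfl⟩ : Λ _ ∈ LinearMap.range Λ), hμΛsym, hμ, exa]
    simp only [map_zero, LinearMap.map_zero₂, LinearMap.map_neg₂, LinearMap.zero_apply, add_zero, zero_add]
    have := hBsymm _ hax z hz
    linarith
  have c4 : ∀ x ∈ m, ∀ a ∈ LinearMap.range Λ, ∀ b ∈ LinearMap.range Λ,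
      Q ⁅x, a⁆ b + Q a ⁅x, b⁆ = 0 := by
    intro x hx a ha b hb
    have hah := hNh a ha
    have hbh := hNh b hb
    have hxa_m : ⁅x, a⁆ ∈ m := by
      rw [show ⁅x, a⁆ = -⁅a, x⁆ from (lie_skew _ _).symm]
      exact neg_mem (hred' a hah x hx)
    have hxb_m : ⁅x, b⁆ ∈ m := by
      rw [show ⁅x, b⁆ = -⁅b, x⁆ from (lie_skew _ _).symm]
      exact neg_mem (hred' b hbh x hx)
    rw [hQ, hQ, hph0 _ hxa_m, hpm0 b hbh, hpm0 a hah, hph0 _ hxb_m]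
    simp only [map_zero, LinearMap.map_zero₂, LinearMap.zero_apply, add_zero, zero_add]
  have Einv_m : ∀ x ∈ m, ∀ v ∈ gbar g m, ∀ w ∈ gbar g m,
      Q ⁅x, v⁆ w + Q v ⁅x, w⁆ = 0 := by
    intro x hx v hv w hw
    have hv' := hphG v hv
    have hw' := hphG w hw
    have egoal : Q ⁅x, v⁆ w + Q v ⁅x, w⁆
        = Q ⁅x, ph v + pm v⁆ (ph w + pm w) + Q (ph v + pm v) ⁅x, ph w + pm w⁆ := by
      rw [hdecomp v, hdecomp w]
    rw [egoal]
    simp only [lie_add, map_add, LinearMap.add_apply]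
    linarith [c1 x hx (pm v) (hpm v) (pm w) (hpm w),
      c2 x hx (pm v) (hpm v) (ph w) hw',
      c3 x hx (ph v) hv' (pm w) (hpm w),
      c4 x hx (ph v) hv' (ph w) hw']
  have Einv : ∀ u ∈ gbar g m, ∀ v ∈ gbar g m, ∀ w ∈ gbar g m,
      Q ⁅u, v⁆ w + Q v ⁅u, w⁆ = 0 := by
    intro u hu v hv w hw
    let Emap : g →ₗ[ℝ] ℝ := ((Q.flip w) ∘ₗ (rmul v)) + ((Q v) ∘ₗ (rmul w))
    have hEmap : ∀ u' : g, Emap u' = Q ⁅u', v⁆ w + Q v ⁅u', w⁆ := by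
      intro u'
      simp [Emap, rmul, LinearMap.flip_apply]
    have hle : gbar g m ≤ LinearMap.ker Emap := by
      apply sup_le
      · intro x hx
        rw [LinearMap.mem_ker, hEmap]
        exact Einv_m x hx v hv w hw
      · rw [Submodule.span_le]
        rintro _ ⟨x, hx, y, hy, rfl⟩
        rw [SetLike.mem_coe, LinearMap.mem_ker, hEmap]
        have q1 : Q ⁅(⁅x, y⁆ : g), v⁆ w = Q ⁅x, ⁅y, v⁆⁆ w - Q ⁅y, ⁅x, v⁆⁆ w := by
          rw [lie_lie, map_sub, LinearMap.sub_apply]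
        have q2 : Q v ⁅(⁅x, y⁆ : g), w⁆ = Q v ⁅x, ⁅y, w⁆⁆ - Q v ⁅y, ⁅x, w⁆⁆ := by
          rw [lie_lie, map_sub]
        have e1 := Einv_m x hx ⁅y, v⁆ (idl y v hv) w hw
        have e2 := Einv_m y hy ⁅x, v⁆ (idl x v hv) w hw
        have e3 := Einv_m x hx v hv ⁅y, w⁆ (idl y w hw)
        have e4 := Einv_m y hy v hv ⁅x, w⁆ (idl x w hw)
        linarith
    have h0 := LinearMap.mem_ker.mp (hle hu)
    rw [hEmap u] at h0
    exact h0
  -- ## nondegeneracy on ḡ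
  have ndG : ∀ u ∈ gbar g m, (∀ v ∈ gbar g m, Q u v = 0) → u = 0 := by
    intro u hu hz
    have h1 : pm u = 0 := by
      apply hBnd (pm u) (hpm u)
      intro y hy
      have hq := hz y (hmG hy)
      rw [hQ, hpm_id y hy, hph0 y hy] at hq
      simpa using hq
    have hphu : ph u = u := by
      have e := hdecomp u
      rw [h1, add_zero] at e
      exact e
    have huN : u ∈ LinearMap.range Λ := by rw [← hphu]; exact hphG u hu
    have huh : u ∈ h.toSubmodule := hNh u huN
    have hkill : ∀ x ∈ m, ⁅u, x⁆ = 0 := by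
      intro x hx
      apply hBnd _ (hred' u huh x hx)
      intro y hy
      have hvG : Λ ((⟨x, hx⟩ : ↥m) ⊗ₜ (⟨y, hy⟩ : ↥m)) ∈ gbar g m := hNG _ ⟨_, rfl⟩
      have hq := hz _ hvG
      obtain ⟨t, hΛt⟩ := huN
      have e4 : ph (Λ ((⟨x, hx⟩ : ↥m) ⊗ₜ (⟨y, hy⟩ : ↥m)))
          = Λ ((⟨x, hx⟩ : ↥m) ⊗ₜ (⟨y, hy⟩ : ↥m)) := hph_id _ (hNh _ ⟨_, rfl⟩)
      rw [hQ, h1, hphu, e4, ← hΛt,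
        hFΛ t _ (⟨_, rfl⟩ : Λ _ ∈ LinearMap.range Λ), hμΛsym, hμ, hΛt] at hq
      simp only [LinearMap.map_zero₂, zero_add] at hq
      rw [hBsymm _ (hred' u huh x hx) y hy]
      exact hq
    let I : LieIdeal ℝ g :=
      { carrier := {b : g | b ∈ h.toSubmodule ∧ ∀ x ∈ m, ⁅b, x⁆ = 0}
        add_mem' := by
          rintro a b ⟨ha1, ha2⟩ ⟨hb1, hb2⟩
          refine ⟨Submodule.add_mem _ ha1 hb1, fun x hx => ?_⟩
          rw [add_lie, ha2 x hx, hb2 x hx, add_zero]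
        zero_mem' := ⟨Submodule.zero_mem _, fun x _ => zero_lie x⟩
        smul_mem' := by
          rintro c a ⟨ha1, ha2⟩
          refine ⟨Submodule.smul_mem _ c ha1, fun x hx => ?_⟩
          rw [smul_lie, ha2 x hx, smul_zero]
        lie_mem := by
          rintro c b ⟨hb1, hb2⟩
          have e : ⁅c, b⁆ = ⁅ph c, b⁆ + ⁅pm c, b⁆ := by rw [← add_lie, hdecomp]
          have e2 : ⁅pm c, b⁆ = 0 := by
            rw [show ⁅pm c, b⁆ = -⁅b, pm c⁆ from (lie_skew _ _).symm, hb2 _ (hpm c),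
              neg_zero]
          constructor
          · rw [e, e2, add_zero]
            exact (LieSubalgebra.mem_toSubmodule h).mpr
              (h.lie_mem ((LieSubalgebra.mem_toSubmodule h).mp (hph c))
                ((LieSubalgebra.mem_toSubmodule h).mp hb1))
          · intro x hx
            rw [e, e2, add_zero, lie_lie, hb2 x hx, lie_zero,
              hb2 _ (hred' _ (hph c) x hx), sub_zero] }
    have hIle : (I : Submodule ℝ g) ≤ h.toSubmodule := fun b hb => hb.1
    have hIbot := heff I hIle
    have huI : u ∈ I := ⟨huh, hkill⟩
    rw [hIbot] at huI
    exact (LieSubmodule.mem_bot _).mp huI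
  -- ## nondegeneracy on h ∩ ḡ
  have ndH : ∀ a ∈ h.toSubmodule ⊓ gbar g m,
      (∀ b ∈ h.toSubmodule ⊓ gbar g m, Q a b = 0) → a = 0 := by
    intro a ha hz
    obtain ⟨hah, haG⟩ := Submodule.mem_inf.mp ha
    apply ndG a haG
    intro v hv
    have hphvN := hphG v hv
    have hdv : Q a v = Q a (ph v) + Q a (pm v) := by
      have e : Q a v = Q a (ph v + pm v) := by rw [hdecomp]
      rw [e, map_add]
    have h1 : Q a (ph v) = 0 := hz _ (Submodule.mem_inf.mpr ⟨hNh _ hphvN, hNG _ hphvN⟩)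
    have h2 : Q a (pm v) = 0 := Qhm a hah _ (hpm v)
    rw [hdv, h1, h2, add_zero]
  -- ## uniqueness
  have uniq : ∀ Q' : LinearMap.BilinForm ℝ g,
      ((∀ u ∈ gbar g m, ∀ v ∈ gbar g m, Q' u v = Q' v u) ∧
       (∀ u ∈ gbar g m, ∀ v ∈ gbar g m, ∀ w ∈ gbar g m, Q' ⁅u, v⁆ w + Q' v ⁅u, w⁆ = 0) ∧
       (∀ a ∈ h.toSubmodule ⊓ gbar g m, ∀ x ∈ m, Q' a x = 0) ∧
       (∀ x ∈ m, ∀ y ∈ m, Q' x y = B x y)) →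
      ∀ u ∈ gbar g m, ∀ v ∈ gbar g m, Q' u v = Q u v := by
    rintro Q' ⟨hsym', hinvQ', hhm', hmm'⟩ u hu v hv
    have hmm_both : ∀ x ∈ m, ∀ y ∈ m, Q' x y = Q x y := by
      intro x hx y hy
      rw [hmm' x hx y hy, Qmm x hx y hy]
    have hmh : ∀ x ∈ m, ∀ a ∈ h.toSubmodule ⊓ gbar g m, Q' x a = Q x a := by
      intro x hx a ha
      have haG := (Submodule.mem_inf.mp ha).2
      rw [hsym' x (hmG hx) a haG, Qsym x (hmG hx) a haG, hhm' a ha x hx,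
        Qhm a (Submodule.mem_inf.mp ha).1 x hx]
    have hNN : ∀ b ∈ h.toSubmodule ⊓ gbar g m, ∀ aT ∈ LinearMap.range Λ,
        Q' aT b = Q aT b := by
      intro b hb
      have hbh := (Submodule.mem_inf.mp hb).1
      have hbG := (Submodule.mem_inf.mp hb).2
      have hgen : ∀ x ∈ m, ∀ y ∈ m, Q' (ph ⁅x, y⁆) b = Q (ph ⁅x, y⁆) b := by
        intro x hx y hy
        have hxbm : ⁅x, b⁆ ∈ m := by
          rw [show ⁅x, b⁆ = -⁅b, x⁆ from (lie_skew _ _).symm]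
          exact neg_mem (hred' b hbh x hx)
        have i1 := hinvQ' x (hmG hx) y (hmG hy) b hbG
        have i2 := Einv x (hmG hx) y (hmG hy) b hbG
        have j1 : Q' y ⁅x, b⁆ = B y ⁅x, b⁆ := hmm' y hy _ hxbm
        have j2 : Q y ⁅x, b⁆ = B y ⁅x, b⁆ := Qmm y hy _ hxbm
        have k1 : Q' (pm ⁅x, y⁆) b = Q (pm ⁅x, y⁆) b :=
          hmh _ (hpm _) b hb
        have e1 : Q' ⁅x, y⁆ b = Q' (ph ⁅x, y⁆) b + Q' (pm ⁅x, y⁆) b := by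
          have e : Q' ⁅x, y⁆ b = Q' (ph ⁅x, y⁆ + pm ⁅x, y⁆) b := by rw [hdecomp]
          rw [e, map_add, LinearMap.add_apply]
        have e2 : Q ⁅x, y⁆ b = Q (ph ⁅x, y⁆) b + Q (pm ⁅x, y⁆) b := by
          have e : Q ⁅x, y⁆ b = Q (ph ⁅x, y⁆ + pm ⁅x, y⁆) b := by rw [hdecomp]
          rw [e, map_add, LinearMap.add_apply]
        linarith
      intro aT haT
      obtain ⟨t, rfl⟩ := haT
      induction t using TensorProduct.induction_on with
      | zero => simp only [map_zero, LinearMap.map_zero₂]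
      | tmul x y =>
          rw [hΛ]
          exact hgen x.1 x.2 y.1 y.2
      | add t1 t2 ih1 ih2 =>
          rw [map_add]
          simp only [map_add, LinearMap.add_apply]
          rw [ih1, ih2]
    have hu' := hphG u hu
    have hv' := hphG v hv
    have hphu_in : ph u ∈ h.toSubmodule ⊓ gbar g m :=
      Submodule.mem_inf.mpr ⟨hNh _ hu', hNG _ hu'⟩
    have hphv_in : ph v ∈ h.toSubmodule ⊓ gbar g m :=
      Submodule.mem_inf.mpr ⟨hNh _ hv', hNG _ hv'⟩
    have eu : Q' u v = Q' (ph u) (ph v) + Q' (ph u) (pm v)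
        + (Q' (pm u) (ph v) + Q' (pm u) (pm v)) := by
      have e : Q' u v = Q' (ph u + pm u) (ph v + pm v) := by rw [hdecomp, hdecomp]
      rw [e]
      simp only [map_add, LinearMap.add_apply]
      ring
    have ev : Q u v = Q (ph u) (ph v) + Q (ph u) (pm v)
        + (Q (pm u) (ph v) + Q (pm u) (pm v)) := by
      have e : Q u v = Q (ph u + pm u) (ph v + pm v) := by rw [hdecomp, hdecomp]
      rw [e]
      simp only [map_add, LinearMap.add_apply]
      ring
    have p1 : Q' (ph u) (ph v) = Q (ph u) (ph v) := hNN (ph v) hphv_in (ph u) hu'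
    have p2 : Q' (ph u) (pm v) = Q (ph u) (pm v) := by
      rw [hhm' _ hphu_in _ (hpm v), Qhm _ (Submodule.mem_inf.mp hphu_in).1 _ (hpm v)]
    have p3 : Q' (pm u) (ph v) = Q (pm u) (ph v) := hmh _ (hpm u) _ hphv_in
    have p4 : Q' (pm u) (pm v) = Q (pm u) (pm v) := hmm_both _ (hpm u) _ (hpm v)
    rw [eu, ev, p1, p2, p3, p4]
  exact ⟨idl, Q, ⟨Qsym, Einv, fun a ha => Qhm a (Submodule.mem_inf.mp ha).1, Qmm⟩,
    ndG, ndH, uniq⟩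
end

section
/- One has g = h ⊕ m as a direct sum of vector spaces, [h,m] ⊆ m, the restriction ⟨,⟩ := Q|_{m×m} is nondegenerate and satisfies ⟨[x,y]_m, z⟩ + ⟨y,[x,z]_m⟩ = 0 for all x,y,z ∈ m (where x_m denotes the m-component of x), and moreover g = m + [m,m]. -/
/-- Kostant's theorem, converse direction (Theorem 2.2, second part): if `Q` is a
nondegenerate ad-invariant symmetric bilinear form on `g` whose restriction to the
subalgebra `h` is nondegenerate, and `m := h^⊥`, then `g = h ⊕ m`, `[h,m] ⊆ m`,
the restriction of `Q` to `m` is nondegenerate and naturally reductive, and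
`g = m + [m,m]`. -/
theorem kostant_converse
    (g : Type) [LieRing g] [LieAlgebra ℝ g] [FiniteDimensional ℝ g]
    (Q : LinearMap.BilinForm ℝ g)
    (hQsymm : ∀ u v : g, Q u v = Q v u)
    (hQnd : Q.Nondegenerate)
    (hQinv : ∀ u v w : g, Q ⁅u, v⁆ w = - Q v ⁅u, w⁆)
    (h : LieSubalgebra ℝ g)
    -- h contains no nonzero ideal of g (almost effectiveness)
    (heff : ∀ I : LieIdeal ℝ g, (I : Submodule ℝ g) ≤ h.toSubmodule → I = ⊥)
    -- Q restricted to h is nondegenerate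
    (hQh : ∀ a ∈ h, (∀ b ∈ h, Q a b = 0) → a = 0)
    -- m = h^⊥
    (m : Submodule ℝ g)
    (hm : ∀ x, x ∈ m ↔ ∀ a ∈ h, Q x a = 0) :
    -- g = h ⊕ m as vector spaces
    IsCompl h.toSubmodule m ∧
    -- [h,m] ⊆ m
    (∀ a ∈ h, ∀ x ∈ m, ⁅a, x⁆ ∈ m) ∧
    -- ⟨,⟩ := Q|_{m×m} is nondegenerate
    (∀ x ∈ m, (∀ y ∈ m, Q x y = 0) → x = 0) ∧
    -- natural reductivity: for the projection pm onto m along h,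
    -- ⟨[x,y]_m, z⟩ + ⟨y, [x,z]_m⟩ = 0 for all x,y,z ∈ m
    (∀ pm : g →ₗ[ℝ] g, (∀ x, pm x ∈ m) → (∀ x, x - pm x ∈ h.toSubmodule) →
      ∀ x ∈ m, ∀ y ∈ m, ∀ z ∈ m, Q (pm ⁅x, y⁆) z + Q y (pm ⁅x, z⁆) = 0) ∧
    -- g = m + [m,m]
    (m ⊔ Submodule.span ℝ {z | ∃ x ∈ m, ∃ y ∈ m, z = ⁅x, y⁆}) = ⊤ := by
  have hrefl : Q.IsRefl := fun u v huv => by rw [hQsymm]; exact huv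
  -- m is the orthogonal of h
  have hm_eq : m = Q.orthogonal h.toSubmodule := by
    ext x
    rw [hm, LinearMap.BilinForm.mem_orthogonal_iff]
    constructor
    · intro hx a ha; exact hrefl x a (hx a ha)
    · intro hx a ha; exact hrefl a x (hx a ha)
  have hQhnd : (Q.restrict h.toSubmodule).Nondegenerate := by
    refine ⟨?_, ?_⟩
    · rintro ⟨a, ha⟩ hab
      have : a = 0 := hQh a ha (fun b hb => hab ⟨b, hb⟩)
      exact Subtype.ext this
    · rintro ⟨a, ha⟩ hab
      have : a = 0 := hQh a ha (fun b hb => by rw [hQsymm]; exact hab ⟨b, hb⟩)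
      exact Subtype.ext this
  -- Part 1
  have hcompl : IsCompl h.toSubmodule m := by
    rw [hm_eq]
    exact Q.isCompl_orthogonal_of_restrict_nondegenerate hrefl hQhnd
  -- Part 2
  have hbr : ∀ a ∈ h, ∀ x ∈ m, ⁅a, x⁆ ∈ m := by
    intro a ha x hx
    rw [hm]
    intro b hb
    rw [hQinv a x b, (hm x).1 hx _ (h.lie_mem ha hb), neg_zero]
  -- decomposition
  have hdec : ∀ z : g, ∃ a ∈ h.toSubmodule, ∃ y ∈ m, z = a + y := by
    intro z
    have hz : z ∈ h.toSubmodule ⊔ m := by rw [hcompl.sup_eq_top]; trivial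
    obtain ⟨a, ha, y, hy, hz⟩ := Submodule.mem_sup.1 hz
    exact ⟨a, ha, y, hy, hz.symm⟩
  -- Part 3
  have hndm : ∀ x ∈ m, (∀ y ∈ m, Q x y = 0) → x = 0 := by
    intro x hx hxy
    refine hQnd.1 x (fun z => ?_)
    obtain ⟨a, ha, y, hy, rfl⟩ := hdec z
    have h1 : Q x a = 0 := (hm x).1 hx a ha
    have h2 : Q x y = 0 := hxy y hy
    simp [h1, h2]
  -- orthogonality against h-components
  have hQmh : ∀ x ∈ m, ∀ a ∈ h.toSubmodule, Q x a = 0 := fun x hx a ha => (hm x).1 hx a ha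
  -- Part 4
  have hnr : ∀ pm : g →ₗ[ℝ] g, (∀ x, pm x ∈ m) → (∀ x, x - pm x ∈ h.toSubmodule) →
      ∀ x ∈ m, ∀ y ∈ m, ∀ z ∈ m, Q (pm ⁅x, y⁆) z + Q y (pm ⁅x, z⁆) = 0 := by
    intro pm hpm hpm' x hx y hy z hz
    have e1 : Q (pm ⁅x, y⁆) z = Q ⁅x, y⁆ z := by
      have : Q (⁅x, y⁆ - pm ⁅x, y⁆) z = 0 :=
        hrefl z _ (hQmh z hz _ (hpm' ⁅x, y⁆))
      have := sub_eq_zero.1 (by simpa [sub_eq_zero] using this)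
      simpa using this.symm
    have e2 : Q y (pm ⁅x, z⁆) = Q y ⁅x, z⁆ := by
      have h0 : Q y (⁅x, z⁆ - pm ⁅x, z⁆) = 0 := hQmh y hy _ (hpm' ⁅x, z⁆)
      have : Q y ⁅x, z⁆ - Q y (pm ⁅x, z⁆) = 0 := by simpa using h0
      linarith
    rw [e1, e2, hQinv x y z]
    ring
  refine ⟨hcompl, hbr, hndm, hnr, ?_⟩
  -- Part 5
  set S : Set g := {z | ∃ x ∈ m, ∃ y ∈ m, z = ⁅x, y⁆} with hS
  set W : Submodule ℝ g := m ⊔ Submodule.span ℝ S with hW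
  have hmW : m ≤ W := le_sup_left
  have hSW : ∀ x ∈ m, ∀ y ∈ m, ⁅x, y⁆ ∈ W :=
    fun x hx y hy => Submodule.mem_sup_right (Submodule.subset_span ⟨x, hx, y, hy, rfl⟩)
  -- the orthogonal of W
  set U : Submodule ℝ g := Q.orthogonal W with hU
  have hUQ : ∀ u ∈ U, ∀ w ∈ W, Q u w = 0 := fun u hu w hw => hrefl w u (hu w hw)
  -- U ⊆ h
  have hUh : U ≤ h.toSubmodule := by
    intro u hu
    obtain ⟨a, ha, y, hy, rfl⟩ := hdec u
    have hy0 : y = 0 := by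
      refine hndm y hy (fun z hz => ?_)
      have h1 : Q (a + y) z = 0 := hUQ _ hu z (hmW hz)
      have h2 : Q a z = 0 := hrefl z a (hQmh z hz a ha)
      have : Q a z + Q y z = 0 := by simpa using h1
      linarith
    simpa [hy0] using ha
  -- U commutes with m
  have hcomm : ∀ u ∈ U, ∀ x ∈ m, ⁅x, u⁆ = 0 := by
    intro u hu x hx
    have hum : ⁅x, u⁆ ∈ m := by
      have := hbr u (hUh hu) x hx
      have hneg : -⁅u, x⁆ ∈ m := m.neg_mem this
      simpa [lie_skew] using hneg
    refine hndm _ hum (fun y hy => ?_)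
    rw [hQinv x u y]
    rw [hUQ u hu _ (hSW x hx y hy), neg_zero]
  -- U is an ideal
  have hideal : ∀ (v : g), ∀ u ∈ U, ⁅v, u⁆ ∈ U := by
    intro v u hu
    obtain ⟨b, hb, x, hx, rfl⟩ := hdec v
    have hxu : ⁅x, u⁆ = 0 := hcomm u hu x hx
    have hbu : ⁅b, u⁆ ∈ U := by
      intro w hw
      -- show Q w ⁅b,u⁆ = 0, using hrefl: it suffices that W ≤ ker (Q ⁅b,u⁆)
      have hker : W ≤ LinearMap.ker (Q ⁅b, u⁆) := by
        refine sup_le ?_ (Submodule.span_le.2 ?_)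
        · intro y hy
          rw [LinearMap.mem_ker, hQinv b u y]
          rw [hUQ u hu _ (hmW (hbr b hb y hy)), neg_zero]
        · rintro _ ⟨y, hy, z, hz, rfl⟩
          rw [SetLike.mem_coe, LinearMap.mem_ker, hQinv b u ⁅y, z⁆]
          have hlie : ⁅b, ⁅y, z⁆⁆ = ⁅⁅b, y⁆, z⁆ + ⁅y, ⁅b, z⁆⁆ := by
            rw [leibniz_lie]
          rw [hlie, map_add]
          rw [hUQ u hu _ (hSW _ (hbr b hb y hy) z hz),
            hUQ u hu _ (hSW y hy _ (hbr b hb z hz))]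
          simp
      exact hrefl _ w (hker hw)
    have : ⁅b + x, u⁆ = ⁅b, u⁆ := by rw [add_lie, hxu, add_zero]
    rw [this]
    exact hbu
  -- package as LieIdeal and kill it
  have hUbot : U = ⊥ := by
    let I : LieIdeal ℝ g :=
      { toSubmodule := U
        lie_mem := fun {v u} hu => hideal v u hu }
    have hI : I = ⊥ := heff I hUh
    have : (I : Submodule ℝ g) = ⊥ := by rw [hI]; rfl
    exact this
  -- conclude W = ⊤ by dimension count
  have hfr : Module.finrank ℝ U = Module.finrank ℝ g - Module.finrank ℝ W :=
    LinearMap.BilinForm.finrank_orthogonal hQnd W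
  rw [hUbot, finrank_bot] at hfr
  have hle : Module.finrank ℝ W ≤ Module.finrank ℝ g := Submodule.finrank_le W
  have : Module.finrank ℝ W = Module.finrank ℝ g := by omega
  exact Submodule.eq_top_of_finrank_eq this
end

section
/- The bracket [(h1,x1,α1),(h2,x2,α2)] := ([h1,h2]_h, [x1,x2]_d + π(h1)x2 − π(h2)x1, β(x1,x2) + ad*(h1)α2 − ad*(h2)α1) on g := h ⊕ d ⊕ h* is bilinear, alternating, and satisfies the Jacobi identity; hence it makes g a Lie algebra (the double extension of d with respect to (h,π)). -/
open Module

variable {H D : Type} [LieRing H] [LieAlgebra ℝ H] [FiniteDimensional ℝ H]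
  [LieRing D] [LieAlgebra ℝ D] [FiniteDimensional ℝ D]

/-- `beta BD π x y` is the element `β(x,y)` of `h*` given by `a ↦ ⟨π(a)x, y⟩_d`. -/
def beta (BD : LinearMap.BilinForm ℝ D) (π : H →ₗ[ℝ] D →ₗ[ℝ] D) (x y : D) : Dual ℝ H :=
  (BD.flip y).comp (π.flip x)

/-- The double extension bracket on `g = h ⊕ d ⊕ h*`:
`[(h₁,x₁,α₁),(h₂,x₂,α₂)] = ([h₁,h₂], [x₁,x₂] + π(h₁)x₂ − π(h₂)x₁,
β(x₁,x₂) + ad*(h₁)α₂ − ad*(h₂)α₁)` where `ad*(h)α = −α ∘ ad(h)`. -/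
def dbr (BD : LinearMap.BilinForm ℝ D) (π : H →ₗ[ℝ] D →ₗ[ℝ] D)
    (u v : H × D × Dual ℝ H) : H × D × Dual ℝ H :=
  (⁅u.1, v.1⁆,
   ⁅u.2.1, v.2.1⁆ + π u.1 v.2.1 - π v.1 u.2.1,
   beta BD π u.2.1 v.2.1 - v.2.2.comp (LieAlgebra.ad ℝ H u.1)
     + u.2.2.comp (LieAlgebra.ad ℝ H v.1))

/-- The double extension bracket is bilinear, alternating and satisfies the Jacobi
identity; hence it makes `g = h ⊕ d ⊕ h*` a Lie algebra. -/
theorem double_extension_is_lie_algebra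
    (BH : LinearMap.BilinForm ℝ H)
    (hBHsymm : ∀ a b : H, BH a b = BH b a)
    (hBHinv : ∀ a b c : H, BH ⁅a, b⁆ c = - BH b ⁅a, c⁆)
    (BD : LinearMap.BilinForm ℝ D)
    (hBDsymm : ∀ x y : D, BD x y = BD y x)
    (hBDnd : BD.Nondegenerate)
    (hBDinv : ∀ x y z : D, BD ⁅x, y⁆ z = - BD y ⁅x, z⁆)
    (π : H →ₗ[ℝ] D →ₗ[ℝ] D)
    (hπder : ∀ a : H, ∀ x y : D, π a ⁅x, y⁆ = ⁅π a x, y⁆ + ⁅x, π a y⁆)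
    (hπhom : ∀ a b : H, π ⁅a, b⁆ = π a ∘ₗ π b - π b ∘ₗ π a)
    (hπskew : ∀ a : H, ∀ x y : D, BD (π a x) y = - BD x (π a y)) :
    -- bilinear
    (∀ u v w : H × D × Dual ℝ H, dbr BD π (u + v) w = dbr BD π u w + dbr BD π v w) ∧
    (∀ (c : ℝ) (u v : H × D × Dual ℝ H), dbr BD π (c • u) v = c • dbr BD π u v) ∧
    (∀ u v w : H × D × Dual ℝ H, dbr BD π u (v + w) = dbr BD π u v + dbr BD π u w) ∧
    (∀ (c : ℝ) (u v : H × D × Dual ℝ H), dbr BD π u (c • v) = c • dbr BD π u v) ∧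
    -- alternating
    (∀ u : H × D × Dual ℝ H, dbr BD π u u = 0) ∧
    -- Jacobi identity
    (∀ u v w : H × D × Dual ℝ H,
      dbr BD π u (dbr BD π v w) + dbr BD π v (dbr BD π w u) + dbr BD π w (dbr BD π u v) = 0) := by
  have flipsimp := LinearMap.BilinForm.flip_apply (R := ℝ) (M := D)
  refine ⟨?_, ?_, ?_, ?_, ?_, ?_⟩
  · intro u v w
    simp only [dbr, beta, Prod.ext_iff, Prod.fst_add, Prod.snd_add, add_lie, lie_add, map_add,
      LinearMap.add_apply, LinearMap.add_comp, LinearMap.map_add₂]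
    refine ⟨by trivial, by abel, ?_⟩
    ext t
    simp only [LinearMap.add_apply, LinearMap.sub_apply, LinearMap.comp_apply, map_add,
      LieAlgebra.ad_apply, add_lie, LinearMap.BilinForm.flip_apply, LinearMap.flip_apply]
    ring
  · intro c u v
    simp only [dbr, beta, Prod.ext_iff, Prod.smul_fst, Prod.smul_snd, smul_lie, lie_smul, map_smul,
      LinearMap.smul_apply, LinearMap.smul_comp]
    refine ⟨by trivial, ?_, ?_⟩
    · module
    · ext t
      simp only [LinearMap.add_apply, LinearMap.sub_apply, LinearMap.comp_apply, map_smul,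
        LinearMap.smul_apply, smul_eq_mul, LieAlgebra.ad_apply, smul_lie,
        LinearMap.BilinForm.flip_apply, LinearMap.flip_apply]
      ring
  · intro u v w
    simp only [dbr, beta, Prod.ext_iff, Prod.fst_add, Prod.snd_add, add_lie, lie_add, map_add,
      LinearMap.add_apply, LinearMap.add_comp]
    refine ⟨by trivial, by abel, ?_⟩
    ext t
    simp only [LinearMap.add_apply, LinearMap.sub_apply, LinearMap.comp_apply, map_add,
      LieAlgebra.ad_apply, add_lie, LinearMap.BilinForm.flip_apply, LinearMap.flip_apply]
    ring
  · intro c u v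
    simp only [dbr, beta, Prod.ext_iff, Prod.smul_fst, Prod.smul_snd, smul_lie, lie_smul, map_smul,
      LinearMap.smul_apply, LinearMap.smul_comp]
    refine ⟨by trivial, ?_, ?_⟩
    · module
    · ext t
      simp only [LinearMap.add_apply, LinearMap.sub_apply, LinearMap.comp_apply, map_smul,
        LinearMap.smul_apply, smul_eq_mul, LieAlgebra.ad_apply, smul_lie,
        LinearMap.BilinForm.flip_apply, LinearMap.flip_apply]
      ring
  · intro u
    simp only [dbr, beta, Prod.ext_iff, lie_self, Prod.fst_zero, Prod.snd_zero]
    refine ⟨by trivial, by abel, ?_⟩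
    ext t
    simp only [LinearMap.add_apply, LinearMap.sub_apply, LinearMap.comp_apply,
      LinearMap.zero_apply, LinearMap.flip_apply, LinearMap.BilinForm.flip_apply,
      LieAlgebra.ad_apply, lie_self, map_zero]
    linarith [hπskew t u.2.1 u.2.1, hBDsymm u.2.1 (π t u.2.1)]
  · intro u v w
    obtain ⟨a, x, α⟩ := u
    obtain ⟨b, y, β'⟩ := v
    obtain ⟨c, z, γ⟩ := w
    simp only [dbr, beta, Prod.ext_iff, Prod.fst_add, Prod.snd_add, Prod.fst_zero, Prod.snd_zero]
    refine ⟨lie_jacobi a b c, ?_, ?_⟩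
    · simp only [hπhom, LinearMap.sub_apply, LinearMap.comp_apply, hπder, lie_add, lie_sub,
        map_add, map_sub]
      linear_combination (norm := module) lie_jacobi x y z - lie_skew x (π b z)
        - lie_skew y (π c x) - lie_skew z (π a y)
    · ext t
      simp only [LinearMap.add_apply, LinearMap.sub_apply, LinearMap.comp_apply, map_add, map_sub,
        LieAlgebra.ad_apply, LinearMap.BilinForm.flip_apply, LinearMap.flip_apply,
        LinearMap.zero_apply, hπhom, lie_lie]
      have e1 : BD ((π t) x) ⁅y, z⁆ = -(BD x) ((π t) ⁅y, z⁆) := hπskew t x ⁅y, z⁆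
      have e2 : (BD x) ((π t) ⁅y, z⁆) = BD x ⁅(π t) y, z⁆ + BD x ⁅y, (π t) z⁆ := by
        rw [hπder]; exact map_add _ _ _
      have e3 : BD ((π t) y) ⁅z, x⁆ = BD ⁅z, x⁆ ((π t) y) := hBDsymm _ _
      have e4 : BD ⁅z, x⁆ ((π t) y) = -BD x ⁅z, (π t) y⁆ := hBDinv z x ((π t) y)
      have e5 : BD x ⁅z, (π t) y⁆ = -BD x ⁅(π t) y, z⁆ := by
        rw [← lie_skew ((π t) y) z, map_neg, neg_neg]
      have e6 : BD ((π t) z) ⁅x, y⁆ = BD ⁅x, y⁆ ((π t) z) := hBDsymm _ _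
      have e7 : BD ⁅x, y⁆ ((π t) z) = -BD y ⁅x, (π t) z⁆ := hBDinv x y ((π t) z)
      have e8 : BD x ⁅y, (π t) z⁆ = BD ⁅y, (π t) z⁆ x := hBDsymm _ _
      have e9 : BD ⁅y, (π t) z⁆ x = -BD ((π t) z) ⁅y, x⁆ := hBDinv y ((π t) z) x
      have e10 : BD ((π t) z) ⁅y, x⁆ = -BD ((π t) z) ⁅x, y⁆ := by
        rw [← lie_skew x y, map_neg, neg_neg]
      have f1 : BD ((π a) ((π t) y)) z = -BD ((π t) y) ((π a) z) := hπskew a ((π t) y) z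
      have f2 : BD ((π t) ((π a) y)) z = -BD ((π a) y) ((π t) z) := hπskew t ((π a) y) z
      have f3 : BD ((π a) y) ((π t) z) = BD ((π t) z) ((π a) y) := hBDsymm _ _
      have g1 : BD ((π b) ((π t) z)) x = -BD ((π t) z) ((π b) x) := hπskew b ((π t) z) x
      have g2 : BD ((π t) ((π b) z)) x = -BD ((π b) z) ((π t) x) := hπskew t ((π b) z) x
      have g3 : BD ((π b) z) ((π t) x) = BD ((π t) x) ((π b) z) := hBDsymm _ _
      have k1 : BD ((π c) ((π t) x)) y = -BD ((π t) x) ((π c) y) := hπskew c ((π t) x) y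
      have k2 : BD ((π t) ((π c) x)) y = -BD ((π c) x) ((π t) y) := hπskew t ((π c) x) y
      have k3 : BD ((π c) x) ((π t) y) = BD ((π t) y) ((π c) x) := hBDsymm _ _
      linarith [e1, e2, e3, e4, e5, e6, e7, e8, e9, e10, f1, f2, f3, g1, g2, g3, k1, k2, k3]
end

section
/- The symmetric bilinear form Q on g = h ⊕ d ⊕ h* defined by Q((h1,x1,α1),(h2,x2,α2)) := ⟨h1,h2⟩_h + ⟨x1,x2⟩_d + α1(h2) + α2(h1) is nondegenerate and ad-invariant with respect to the double-extension bracket: Q([u,v],w) = −Q(v,[u,w]) for all u,v,w ∈ g. -/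
open Module

variable {H D : Type} [LieRing H] [LieAlgebra ℝ H] [FiniteDimensional ℝ H]
  [LieRing D] [LieAlgebra ℝ D] [FiniteDimensional ℝ D]

/-- The symmetric bilinear form
`Q((h₁,x₁,α₁),(h₂,x₂,α₂)) = ⟨h₁,h₂⟩_h + ⟨x₁,x₂⟩_d + α₁(h₂) + α₂(h₁)` on `g`. -/
def Qde (BH : LinearMap.BilinForm ℝ H) (BD : LinearMap.BilinForm ℝ D)
    (u v : H × D × Dual ℝ H) : ℝ :=
  BH u.1 v.1 + BD u.2.1 v.2.1 + u.2.2 v.1 + v.2.2 u.1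

/-- The form `Q` is nondegenerate and ad-invariant for the double extension bracket. -/
theorem double_extension_form_nondegenerate_ad_invariant
    (BH : LinearMap.BilinForm ℝ H)
    (hBHsymm : ∀ a b : H, BH a b = BH b a)
    (hBHinv : ∀ a b c : H, BH ⁅a, b⁆ c = - BH b ⁅a, c⁆)
    (BD : LinearMap.BilinForm ℝ D)
    (hBDsymm : ∀ x y : D, BD x y = BD y x)
    (hBDnd : BD.Nondegenerate)
    (hBDinv : ∀ x y z : D, BD ⁅x, y⁆ z = - BD y ⁅x, z⁆)
    (π : H →ₗ[ℝ] D →ₗ[ℝ] D)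
    (hπder : ∀ a : H, ∀ x y : D, π a ⁅x, y⁆ = ⁅π a x, y⁆ + ⁅x, π a y⁆)
    (hπhom : ∀ a b : H, π ⁅a, b⁆ = π a ∘ₗ π b - π b ∘ₗ π a)
    (hπskew : ∀ a : H, ∀ x y : D, BD (π a x) y = - BD x (π a y)) :
    -- nondegenerate
    (∀ u : H × D × Dual ℝ H, (∀ v : H × D × Dual ℝ H, Qde BH BD u v = 0) → u = 0) ∧
    -- ad-invariant: Q([u,v],w) = −Q(v,[u,w])
    (∀ u v w : H × D × Dual ℝ H,
      Qde BH BD (dbr BD π u v) w = - Qde BH BD v (dbr BD π u w)) := by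
  constructor
  · rintro ⟨h, x, α⟩ hu
    have hh : h = 0 := by
      rw [← Module.forall_dual_apply_eq_zero_iff ℝ h]
      intro φ
      have := hu (0, 0, φ)
      simpa [Qde] using this
    have hx : x = 0 := by
      apply hBDnd.1
      intro y
      have := hu (0, y, 0)
      simpa [Qde] using this
    have hα : α = 0 := by
      ext b
      have := hu (b, 0, 0)
      simp [Qde, hh] at this
      simpa using this
    simp [hh, hx, hα, Prod.ext_iff]
  · intro u v w
    simp only [Qde, dbr, beta, LinearMap.coe_comp, Function.comp_apply,
      LinearMap.sub_apply, LinearMap.add_apply, map_add, map_sub,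
      LieAlgebra.ad_apply, LinearMap.flip_apply]
    have h1 := hBHinv u.1 v.1 w.1
    have h2 := hBDinv u.2.1 v.2.1 w.2.1
    have h3 := hπskew u.1 v.2.1 w.2.1
    have h4 := hBDsymm (π w.1 u.2.1) v.2.1
    have h5 : (BD.flip v.2.1) ((π w.1) u.2.1) = BD ((π w.1) u.2.1) v.2.1 := rfl
    have h6 : (BD.flip w.2.1) ((π v.1) u.2.1) = BD ((π v.1) u.2.1) w.2.1 := rfl
    have h7 : u.2.2 ⁅w.1, v.1⁆ = - u.2.2 ⁅v.1, w.1⁆ := by rw [← lie_skew, map_neg]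
    have h8 := hBDsymm ((π v.1) u.2.1) w.2.1
    linarith
end

section
/- The map μ : h → End(G(d)) defined by μ(a)(x + ℓ(h)) := π(a)x + ℓ([a,h]_h) is a Lie algebra homomorphism, every μ(a) is a derivation of the Lie algebra G(d), and every μ(a) is skew-symmetric with respect to the form ⟨,⟩ on G(d): ⟨μ(a)u, v⟩ + ⟨u, μ(a)v⟩ = 0 for all u,v ∈ G(d). -/
open Module

variable {H D : Type} [LieRing H] [LieAlgebra ℝ H] [FiniteDimensional ℝ H]
  [LieRing D] [LieAlgebra ℝ D] [FiniteDimensional ℝ D]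

/-- The bracket on `G(d) = d ⊕ h*`: `[x₁+α₁, x₂+α₂] = [x₁,x₂]_d + β(x₁,x₂)`. -/
def gbr (BD : LinearMap.BilinForm ℝ D) (π : H →ₗ[ℝ] D →ₗ[ℝ] D)
    (u v : D × Dual ℝ H) : D × Dual ℝ H :=
  (⁅u.1, v.1⁆, beta BD π u.1 v.1)

/-- The inverse of the isomorphism `ℓ : h → h*`, `ℓ(h) = ⟨h,·⟩_h`. -/
noncomputable def ellInv (BH : LinearMap.BilinForm ℝ H) (hBH : BH.Nondegenerate)
    (α : Dual ℝ H) : H :=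
  (LinearMap.BilinForm.toDual BH hBH).symm α

/-- The metric on `G(d)`: `⟨x₁ + ℓ(h₁), x₂ + ℓ(h₂)⟩ = ⟨h₁,h₂⟩_h + ⟨x₁,x₂⟩_d`. -/
noncomputable def gform (BH : LinearMap.BilinForm ℝ H) (hBH : BH.Nondegenerate)
    (BD : LinearMap.BilinForm ℝ D) (u v : D × Dual ℝ H) : ℝ :=
  BD u.1 v.1 + BH (ellInv BH hBH u.2) (ellInv BH hBH v.2)

/-- The map `μ(a)(x + ℓ(h)) = π(a)x + ℓ([a,h]_h)`. -/
noncomputable def mu (BH : LinearMap.BilinForm ℝ H) (hBH : BH.Nondegenerate)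
    (π : H →ₗ[ℝ] D →ₗ[ℝ] D) (a : H) (u : D × Dual ℝ H) : D × Dual ℝ H :=
  (π a u.1, BH ⁅a, ellInv BH hBH u.2⁆)


lemma ellInv_BH (BH : LinearMap.BilinForm ℝ H) (hBH : BH.Nondegenerate) (h : H) :
    ellInv BH hBH (BH h) = h := by
  have : BH h = (LinearMap.BilinForm.toDual BH hBH) h := by
    ext b; simp [LinearMap.BilinForm.toDual_def]
  rw [this, ellInv, LinearEquiv.symm_apply_apply]

lemma BH_ellInv (BH : LinearMap.BilinForm ℝ H) (hBH : BH.Nondegenerate) (α : Dual ℝ H) (b : H) :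
    BH (ellInv BH hBH α) b = α b := by
  have : (LinearMap.BilinForm.toDual BH hBH) (ellInv BH hBH α) = α :=
    (LinearMap.BilinForm.toDual BH hBH).apply_symm_apply α
  calc BH (ellInv BH hBH α) b
      = (LinearMap.BilinForm.toDual BH hBH) (ellInv BH hBH α) b := by
        rw [LinearMap.BilinForm.toDual_def]
    _ = α b := by rw [this]

lemma ellInv_add (BH : LinearMap.BilinForm ℝ H) (hBH : BH.Nondegenerate) (α β : Dual ℝ H) :
    ellInv BH hBH (α + β) = ellInv BH hBH α + ellInv BH hBH β :=
  map_add (LinearMap.BilinForm.toDual BH hBH).symm α β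

lemma ellInv_smul (BH : LinearMap.BilinForm ℝ H) (hBH : BH.Nondegenerate) (c : ℝ) (α : Dual ℝ H) :
    ellInv BH hBH (c • α) = c • ellInv BH hBH α :=
  map_smul (LinearMap.BilinForm.toDual BH hBH).symm c α

/-- `μ : h → End(G(d))` is a Lie algebra homomorphism whose values are derivations of
`G(d)`, skew-symmetric with respect to the form `⟨,⟩` of `G(d)`. -/
theorem mu_homomorphism_skew_derivations
    (BH : LinearMap.BilinForm ℝ H)
    (hBHsymm : ∀ a b : H, BH a b = BH b a)
    (hBHnd : BH.Nondegenerate)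
    (hBHinv : ∀ a b c : H, BH ⁅a, b⁆ c = - BH b ⁅a, c⁆)
    (BD : LinearMap.BilinForm ℝ D)
    (hBDsymm : ∀ x y : D, BD x y = BD y x)
    (hBDnd : BD.Nondegenerate)
    (hBDinv : ∀ x y z : D, BD ⁅x, y⁆ z = - BD y ⁅x, z⁆)
    (π : H →ₗ[ℝ] D →ₗ[ℝ] D)
    (hπder : ∀ a : H, ∀ x y : D, π a ⁅x, y⁆ = ⁅π a x, y⁆ + ⁅x, π a y⁆)
    (hπhom : ∀ a b : H, π ⁅a, b⁆ = π a ∘ₗ π b - π b ∘ₗ π a)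
    (hπskew : ∀ a : H, ∀ x y : D, BD (π a x) y = - BD x (π a y)) :
    -- each μ(a) is linear, i.e. μ(a) ∈ End(G(d))
    (∀ a : H, ∀ u v : D × Dual ℝ H,
      mu BH hBHnd π a (u + v) = mu BH hBHnd π a u + mu BH hBHnd π a v) ∧
    (∀ a : H, ∀ (c : ℝ) (u : D × Dual ℝ H),
      mu BH hBHnd π a (c • u) = c • mu BH hBHnd π a u) ∧
    -- μ is a Lie algebra homomorphism h → End(G(d))
    (∀ a b : H, ∀ u : D × Dual ℝ H,
      mu BH hBHnd π ⁅a, b⁆ u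
        = mu BH hBHnd π a (mu BH hBHnd π b u) - mu BH hBHnd π b (mu BH hBHnd π a u)) ∧
    -- each μ(a) is a derivation of the Lie algebra G(d)
    (∀ a : H, ∀ u v : D × Dual ℝ H,
      mu BH hBHnd π a (gbr BD π u v)
        = gbr BD π (mu BH hBHnd π a u) v + gbr BD π u (mu BH hBHnd π a v)) ∧
    -- each μ(a) is skew-symmetric with respect to ⟨,⟩
    (∀ a : H, ∀ u v : D × Dual ℝ H,
      gform BH hBHnd BD (mu BH hBHnd π a u) v + gform BH hBHnd BD u (mu BH hBHnd π a v) = 0) :=  by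
  refine ⟨?_, ?_, ?_, ?_, ?_⟩
  · intro a u v
    simp only [mu, Prod.fst_add, Prod.snd_add, map_add, ellInv_add, lie_add, Prod.mk_add_mk]
  · intro a c u
    simp only [mu, Prod.smul_fst, Prod.smul_snd, map_smul, ellInv_smul, lie_smul,
      Prod.smul_mk]
  · intro a b u
    have h1 : π ⁅a, b⁆ u.1 = π a (π b u.1) - π b (π a u.1) := by
      rw [hπhom]; rfl
    have h2 : ellInv BH hBHnd (BH ⁅b, ellInv BH hBHnd u.2⁆) = ⁅b, ellInv BH hBHnd u.2⁆ :=
      ellInv_BH ..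
    have h3 : ellInv BH hBHnd (BH ⁅a, ellInv BH hBHnd u.2⁆) = ⁅a, ellInv BH hBHnd u.2⁆ :=
      ellInv_BH ..
    simp only [mu, h1, h2, h3, Prod.mk_sub_mk]
    congr 1
    rw [lie_lie, map_sub]
  · intro a u v
    simp only [mu, gbr, Prod.mk_add_mk, Prod.mk.injEq]
    constructor
    · exact hπder a u.1 v.1
    · ext b
      have hk : BH (ellInv BH hBHnd (beta BD π u.1 v.1)) ⁅a, b⁆
          = beta BD π u.1 v.1 ⁅a, b⁆ := BH_ellInv ..
      have hsymm : ∀ x y : H, BH ⁅a, x⁆ y = - BH x ⁅a, y⁆ := hBHinv a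
      have lhs : BH ⁅a, ellInv BH hBHnd (beta BD π u.1 v.1)⁆ b
          = - beta BD π u.1 v.1 ⁅a, b⁆ := by rw [hsymm, hk]
      have hBr : π ⁅a, b⁆ u.1 = π a (π b u.1) - π b (π a u.1) := by rw [hπhom]; rfl
      simp only [lhs, beta, LinearMap.add_apply, LinearMap.coe_comp, Function.comp_apply,
        LinearMap.flip_apply, LinearMap.BilinForm.flip_apply] at *
      rw [hBr]
      have : BD (π b u.1) (π a v.1) = - BD (π a (π b u.1)) v.1 := by
        rw [hπskew a (π b u.1) v.1]; ring_nf
      simp only [map_sub, LinearMap.sub_apply, this]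
      ring
  · intro a u v
    simp only [mu, gform, ellInv_BH]
    have h1 : BD (π a u.1) v.1 + BD u.1 (π a v.1) = 0 := by
      rw [hπskew]; ring
    have h2 : BH ⁅a, ellInv BH hBHnd u.2⁆ (ellInv BH hBHnd v.2)
        + BH (ellInv BH hBHnd u.2) ⁅a, ellInv BH hBHnd v.2⁆ = 0 := by
      rw [hBHinv]; ring
    linarith
end

section
/- The bilinear map ∇ on G(d) defined by ∇_{x1+ℓ(h1)}(x2+ℓ(h2)) := ½([x1,x2]_d + β(x1,x2) − π(h1)x2 − π(h2)x1) satisfies the Koszul formula for the form ⟨,⟩ and the bracket of G(d): 2⟨∇_{w1}w2, w3⟩ = ⟨[w1,w2], w3⟩ − ⟨[w2,w3], w1⟩ + ⟨[w3,w1], w2⟩ for all w1,w2,w3 ∈ G(d) (i.e. ∇ is the Levi-Civita connection of the left-invariant metric). -/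
open Module

variable {H D : Type} [LieRing H] [LieAlgebra ℝ H] [FiniteDimensional ℝ H]
  [LieRing D] [LieAlgebra ℝ D] [FiniteDimensional ℝ D]

/-- The connection `∇_{x₁+ℓ(h₁)}(x₂+ℓ(h₂)) = ½([x₁,x₂]_d + β(x₁,x₂) − π(h₁)x₂ − π(h₂)x₁)`. -/
noncomputable def nabG (BH : LinearMap.BilinForm ℝ H) (hBH : BH.Nondegenerate)
    (BD : LinearMap.BilinForm ℝ D) (π : H →ₗ[ℝ] D →ₗ[ℝ] D)
    (u v : D × Dual ℝ H) : D × Dual ℝ H :=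
  ((2⁻¹ : ℝ) • (⁅u.1, v.1⁆ - π (ellInv BH hBH u.2) v.1 - π (ellInv BH hBH v.2) u.1),
   (2⁻¹ : ℝ) • beta BD π u.1 v.1)

/-- `∇` satisfies the Koszul formula for the metric `⟨,⟩` and the bracket of `G(d)`,
i.e. it is the Levi-Civita connection of the left-invariant metric on `G(D)`. -/
theorem nabG_satisfies_Koszul
    (BH : LinearMap.BilinForm ℝ H)
    (hBHsymm : ∀ a b : H, BH a b = BH b a)
    (hBHnd : BH.Nondegenerate)
    (hBHinv : ∀ a b c : H, BH ⁅a, b⁆ c = - BH b ⁅a, c⁆)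
    (BD : LinearMap.BilinForm ℝ D)
    (hBDsymm : ∀ x y : D, BD x y = BD y x)
    (hBDnd : BD.Nondegenerate)
    (hBDinv : ∀ x y z : D, BD ⁅x, y⁆ z = - BD y ⁅x, z⁆)
    (π : H →ₗ[ℝ] D →ₗ[ℝ] D)
    (hπder : ∀ a : H, ∀ x y : D, π a ⁅x, y⁆ = ⁅π a x, y⁆ + ⁅x, π a y⁆)
    (hπhom : ∀ a b : H, π ⁅a, b⁆ = π a ∘ₗ π b - π b ∘ₗ π a)
    (hπskew : ∀ a : H, ∀ x y : D, BD (π a x) y = - BD x (π a y)) :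
    ∀ w₁ w₂ w₃ : D × Dual ℝ H,
      2 * gform BH hBHnd BD (nabG BH hBHnd BD π w₁ w₂) w₃
        = gform BH hBHnd BD (gbr BD π w₁ w₂) w₃
          - gform BH hBHnd BD (gbr BD π w₂ w₃) w₁
          + gform BH hBHnd BD (gbr BD π w₃ w₁) w₂ := by

  intro w₁ w₂ w₃
  have hell : ∀ (α : Dual ℝ H) (b : H), BH (ellInv BH hBHnd α) b = α b := fun α b => by
    unfold ellInv
    exact LinearMap.BilinForm.apply_toDual_symm_apply (hB := hBHnd) (f := α) (v := b)
  have hsm : ∀ (c : ℝ) (α : Dual ℝ H), ellInv BH hBHnd (c • α) = c • ellInv BH hBHnd α :=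
    fun c α => map_smul _ c α
  simp only [gform, nabG, gbr, hsm, map_smul, LinearMap.smul_apply, smul_eq_mul]
  simp only [map_sub, LinearMap.sub_apply, hell, beta, LinearMap.comp_apply,
    LinearMap.flip_apply, LinearMap.BilinForm.flip_apply]
  have h1 := hBDsymm ⁅w₂.1, w₃.1⁆ w₁.1
  have h2 := hBDinv w₃.1 w₁.1 w₂.1
  have h4 : ⁅w₃.1, w₂.1⁆ = -⁅w₂.1, w₃.1⁆ := (lie_skew _ _).symm
  have h3 : BD w₁.1 ⁅w₃.1, w₂.1⁆ = - BD w₁.1 ⁅w₂.1, w₃.1⁆ := by rw [h4]; exact map_neg _ _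
  have h5 := hπskew (ellInv BH hBHnd w₂.2) w₃.1 w₁.1
  have h6 := hBDsymm w₃.1 (π (ellInv BH hBHnd w₂.2) w₁.1)
  ring_nf
  linarith [h1, h2, h3, h5, h6]
end

section
/- Let D : G(d) → G(d) be a linear map with D(d) ⊆ d and D(h*) ⊆ h*, and write B := D|_d, A := D|_{h*}. Then D is a derivation of the Lie algebra G(d) that is skew-symmetric with respect to ⟨,⟩ if and only if: B is a derivation of d skew-symmetric with respect to ⟨,⟩_d, A is skew-symmetric with respect to the restriction of ⟨,⟩ to h*, and B∘π(h) − π(h)∘B = π(ℓ^{-1}(A(ℓ(h)))) for all h ∈ h. In particular, for every a ∈ h, the map μ(a)(x+ℓ(h)) := π(a)x + ℓ([a,h]_h) is a skew-symmetric derivation of G(d) of this form. -/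
open Module

variable {H D : Type} [LieRing H] [LieAlgebra ℝ H] [FiniteDimensional ℝ H]
  [LieRing D] [LieAlgebra ℝ D] [FiniteDimensional ℝ D]

lemma ellInv_BH_apply (BH : LinearMap.BilinForm ℝ H) (hBH : BH.Nondegenerate)
    (α : Dual ℝ H) (k : H) : BH (ellInv BH hBH α) k = α k := by
  rw [ellInv]; exact LinearMap.BilinForm.apply_toDual_symm_apply α k

lemma ellInv_zero (BH : LinearMap.BilinForm ℝ H) (hBH : BH.Nondegenerate) :
    ellInv BH hBH 0 = 0 := map_zero (LinearMap.BilinForm.toDual BH hBH).symm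

/-- With `A` skew, `(Aα)(h) = -α(ℓ⁻¹(A(ℓ h)))`. -/
lemma Aeval (BH : LinearMap.BilinForm ℝ H) (hBH : BH.Nondegenerate)
    (A : Dual ℝ H →ₗ[ℝ] Dual ℝ H)
    (hA : ∀ α α' : Dual ℝ H,
      BH (ellInv BH hBH (A α)) (ellInv BH hBH α')
        + BH (ellInv BH hBH α) (ellInv BH hBH (A α')) = 0)
    (α : Dual ℝ H) (h : H) : A α h = - α (ellInv BH hBH (A (BH h))) := by
  have h1 := hA α (BH h)
  rw [ellInv_BH, ellInv_BH_apply, ellInv_BH_apply] at h1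
  linarith

lemma key (BH : LinearMap.BilinForm ℝ H) (hBHnd : BH.Nondegenerate)
    (BD : LinearMap.BilinForm ℝ D)
    (hBDsymm : ∀ x y : D, BD x y = BD y x)
    (hBDnd : BD.Nondegenerate)
    (π : H →ₗ[ℝ] D →ₗ[ℝ] D)
    (B : D →ₗ[ℝ] D) (A : Dual ℝ H →ₗ[ℝ] Dual ℝ H) :
    ((∀ u v : D × Dual ℝ H,
        ((B (gbr BD π u v).1, A (gbr BD π u v).2) : D × Dual ℝ H)
          = gbr BD π (B u.1, A u.2) v + gbr BD π u (B v.1, A v.2)) ∧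
     (∀ u v : D × Dual ℝ H,
        gform BH hBHnd BD (B u.1, A u.2) v + gform BH hBHnd BD u (B v.1, A v.2) = 0))
    ↔
    ((∀ x y : D, B ⁅x, y⁆ = ⁅B x, y⁆ + ⁅x, B y⁆) ∧
     (∀ x y : D, BD (B x) y + BD x (B y) = 0) ∧
     (∀ α α' : Dual ℝ H,
       BH (ellInv BH hBHnd (A α)) (ellInv BH hBHnd α')
         + BH (ellInv BH hBHnd α) (ellInv BH hBHnd (A α')) = 0) ∧
     (∀ (h : H) (x : D), B (π h x) - π h (B x) = π (ellInv BH hBHnd (A (BH h))) x)) := by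
  have hbeta : ∀ (x y : D) (h : H), beta BD π x y h = BD (π h x) y := fun _ _ _ => rfl
  constructor
  · rintro ⟨hd, hs⟩
    have hBskew : ∀ x y : D, BD (B x) y + BD x (B y) = 0 := by
      intro x y
      have := hs (x, 0) (y, 0)
      simpa [gform, ellInv_zero, map_zero] using this
    have hAskew : ∀ α α' : Dual ℝ H,
        BH (ellInv BH hBHnd (A α)) (ellInv BH hBHnd α')
          + BH (ellInv BH hBHnd α) (ellInv BH hBHnd (A α')) = 0 := by
      intro α α'
      have := hs (0, α) (0, α')
      simpa [gform, map_zero] using this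
    refine ⟨fun x y => ?_, hBskew, hAskew, fun h x => ?_⟩
    · simpa [gbr] using congrArg Prod.fst (hd (x, 0) (y, 0))
    · have hz : ∀ z : D,
          BD (B (π h x) - π h (B x) - π (ellInv BH hBHnd (A (BH h))) x) z = 0 := by
        intro z
        have hd2 : A (beta BD π x z) = beta BD π (B x) z + beta BD π x (B z) := by
          simpa [gbr] using congrArg Prod.snd (hd (x, 0) (z, 0))
        have e1 := DFunLike.congr_fun hd2 h
        rw [Aeval BH hBHnd A hAskew] at e1
        simp only [hbeta, LinearMap.add_apply] at e1
        have e2 := hBskew (π h x) z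
        simp only [map_sub, LinearMap.sub_apply]
        linarith
      exact sub_eq_zero.mp (hBDnd.1 _ hz)
  · rintro ⟨hBder, hBskew, hAskew, hcomm⟩
    constructor
    · intro u v
      refine Prod.ext ?_ ?_
      · simpa [gbr] using hBder u.1 v.1
      · show A (beta BD π u.1 v.1) = _
        have hsnd : (gbr BD π (B u.1, A u.2) v + gbr BD π u (B v.1, A v.2)).2
            = beta BD π (B u.1) v.1 + beta BD π u.1 (B v.1) := rfl
        rw [hsnd]
        apply LinearMap.ext
        intro h
        rw [Aeval BH hBHnd A hAskew]
        have e1 : π (ellInv BH hBHnd (A (BH h))) u.1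
            = B (π h u.1) - π h (B u.1) := (hcomm h u.1).symm
        simp only [hbeta, LinearMap.add_apply, e1, map_sub, LinearMap.sub_apply]
        have e2 := hBskew (π h u.1) v.1
        linarith
    · intro u v
      simp only [gform]
      have e1 := hBskew u.1 v.1
      have e2 := hAskew u.2 v.2
      linarith

/-- Characterization of the skew-symmetric derivations of `G(d)` preserving the
splitting `d ⊕ h*`; in particular each `μ(a)`, `a ∈ h`, is such a derivation. -/
theorem skew_symmetric_derivations_of_Gd
    (BH : LinearMap.BilinForm ℝ H)
    (hBHsymm : ∀ a b : H, BH a b = BH b a)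
    (hBHnd : BH.Nondegenerate)
    (hBHinv : ∀ a b c : H, BH ⁅a, b⁆ c = - BH b ⁅a, c⁆)
    (BD : LinearMap.BilinForm ℝ D)
    (hBDsymm : ∀ x y : D, BD x y = BD y x)
    (hBDnd : BD.Nondegenerate)
    (hBDinv : ∀ x y z : D, BD ⁅x, y⁆ z = - BD y ⁅x, z⁆)
    (π : H →ₗ[ℝ] D →ₗ[ℝ] D)
    (hπder : ∀ a : H, ∀ x y : D, π a ⁅x, y⁆ = ⁅π a x, y⁆ + ⁅x, π a y⁆)
    (hπhom : ∀ a b : H, π ⁅a, b⁆ = π a ∘ₗ π b - π b ∘ₗ π a)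
    (hπskew : ∀ a : H, ∀ x y : D, BD (π a x) y = - BD x (π a y))
    -- Dm is a linear map of G(d) with Dm(d) ⊆ d and Dm(h*) ⊆ h*,
    -- B = Dm|_d and A = Dm|_{h*}
    (Dm : (D × Dual ℝ H) →ₗ[ℝ] (D × Dual ℝ H))
    (B : D →ₗ[ℝ] D) (A : Dual ℝ H →ₗ[ℝ] Dual ℝ H)
    (hDm : ∀ u : D × Dual ℝ H, Dm u = (B u.1, A u.2)) :
    -- Dm is a skew-symmetric derivation of G(d) ...
    (((∀ u v : D × Dual ℝ H, Dm (gbr BD π u v) = gbr BD π (Dm u) v + gbr BD π u (Dm v)) ∧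
      (∀ u v : D × Dual ℝ H, gform BH hBHnd BD (Dm u) v + gform BH hBHnd BD u (Dm v) = 0))
    ↔
    -- ... iff B is a skew-symmetric derivation of d, A is skew-symmetric on h*, and
    -- B ∘ π(h) − π(h) ∘ B = π(ℓ⁻¹(A(ℓ(h)))) for all h ∈ h
    ((∀ x y : D, B ⁅x, y⁆ = ⁅B x, y⁆ + ⁅x, B y⁆) ∧
     (∀ x y : D, BD (B x) y + BD x (B y) = 0) ∧
     (∀ α α' : Dual ℝ H,
       BH (ellInv BH hBHnd (A α)) (ellInv BH hBHnd α')
         + BH (ellInv BH hBHnd α) (ellInv BH hBHnd (A α')) = 0) ∧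
     (∀ (h : H) (x : D), B (π h x) - π h (B x) = π (ellInv BH hBHnd (A (BH h))) x))) ∧
    -- in particular each μ(a) is a skew-symmetric derivation of G(d)
    (∀ a : H,
      (∀ u v : D × Dual ℝ H,
        mu BH hBHnd π a (gbr BD π u v)
          = gbr BD π (mu BH hBHnd π a u) v + gbr BD π u (mu BH hBHnd π a v)) ∧
      (∀ u v : D × Dual ℝ H,
        gform BH hBHnd BD (mu BH hBHnd π a u) v
          + gform BH hBHnd BD u (mu BH hBHnd π a v) = 0)) := by
  refine ⟨?_, ?_⟩
  · have hkey := key BH hBHnd BD hBDsymm hBDnd π B A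
    simp only [hDm]
    exact hkey
  · intro a
    set Aa : Dual ℝ H →ₗ[ℝ] Dual ℝ H :=
      (BH : H →ₗ[ℝ] Dual ℝ H) ∘ₗ (LieAlgebra.ad ℝ H a) ∘ₗ
        ((LinearMap.BilinForm.toDual BH hBHnd).symm : Dual ℝ H →ₗ[ℝ] H) with hAa
    have hAaApp : ∀ α : Dual ℝ H, Aa α = BH ⁅a, ellInv BH hBHnd α⁆ := by
      intro α
      simp [hAa, ellInv, LieAlgebra.ad_apply]
    have hmu : ∀ u : D × Dual ℝ H, mu BH hBHnd π a u = ((π a) u.1, Aa u.2) := by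
      intro u
      rw [mu, hAaApp]
    have c1 : ∀ x y : D, π a ⁅x, y⁆ = ⁅π a x, y⁆ + ⁅x, π a y⁆ := hπder a
    have c2 : ∀ x y : D, BD (π a x) y + BD x (π a y) = 0 := by
      intro x y
      have := hπskew a x y
      linarith
    have c3 : ∀ α α' : Dual ℝ H,
        BH (ellInv BH hBHnd (Aa α)) (ellInv BH hBHnd α')
          + BH (ellInv BH hBHnd α) (ellInv BH hBHnd (Aa α')) = 0 := by
      intro α α'
      rw [hAaApp, hAaApp, ellInv_BH, ellInv_BH]
      have := hBHinv a (ellInv BH hBHnd α) (ellInv BH hBHnd α')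
      linarith
    have c4 : ∀ (h : H) (x : D),
        π a (π h x) - π h (π a x) = π (ellInv BH hBHnd (Aa (BH h))) x := by
      intro h x
      rw [hAaApp, ellInv_BH, ellInv_BH]
      have e := DFunLike.congr_fun (hπhom a h) x
      rw [e]
      simp
    obtain ⟨k1, k2⟩ := (key BH hBHnd BD hBDsymm hBDnd π (π a) Aa).mpr ⟨c1, c2, c3, c4⟩
    refine ⟨fun u v => ?_, fun u v => ?_⟩
    · rw [hmu, hmu, hmu]
      exact k1 u v
    · rw [hmu, hmu]
      exact k2 u v
end

section
/- The Lie algebra n is 2-step nilpotent (i.e. [n,n] ≠ 0 and [n,[n,n]] = 0), its center equals R·z ⊕ ker A, and if A is invertible then n is isomorphic to the Heisenberg Lie algebra h_{2s+1} with 2s = p+q, i.e. the (2s+1)-dimensional Lie algebra with basis X_1,…,X_s, Y_1,…,Y_s, Z whose only nonzero brackets among basis vectors are [X_i, Y_i] = Z. -/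
open Module


/-- The standard symmetric bilinear form of signature `(p,q)` on `ℝ^{p+q}`. -/
def formPQ (p q : ℕ) (x y : Fin (p + q) → ℝ) : ℝ :=
  ∑ i : Fin (p + q), (if (i : ℕ) < p then (1 : ℝ) else -1) * x i * y i

/-- The bracket of `n = ℝ^{p,q} ⊕ ℝ·z`: `[x, y] = ⟨Ax, y⟩_{p,q}·z` with `z` central,
where an element of `n` is a pair (vector in `ℝ^{p+q}`, coefficient of `z`). -/
def nbr (p q : ℕ) (A : (Fin (p + q) → ℝ) →ₗ[ℝ] (Fin (p + q) → ℝ))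
    (u v : (Fin (p + q) → ℝ) × ℝ) : (Fin (p + q) → ℝ) × ℝ :=
  (0, formPQ p q (A u.1) v.1)

/-- The bracket of the Heisenberg Lie algebra `h_{2s+1}` on basis
`X₁,…,X_s, Y₁,…,Y_s, Z` with only nonzero brackets `[Xᵢ, Yᵢ] = Z`. -/
def heisBr (s : ℕ) (u v : (Fin s → ℝ) × (Fin s → ℝ) × ℝ) :
    (Fin s → ℝ) × (Fin s → ℝ) × ℝ :=
  (0, 0, ∑ i, (u.1 i * v.2.1 i - v.1 i * u.2.1 i))

lemma formPQ_symm (p q : ℕ) (x y : Fin (p + q) → ℝ) : formPQ p q x y = formPQ p q y x := by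
  unfold formPQ; apply Finset.sum_congr rfl; intros; ring

lemma formPQ_single (p q : ℕ) (v : Fin (p + q) → ℝ) (i : Fin (p + q)) :
    formPQ p q v (Pi.single i 1) = (if (i : ℕ) < p then (1 : ℝ) else -1) * v i := by
  unfold formPQ
  rw [Finset.sum_eq_single i]
  · simp
  · intro j _ hj; simp [Pi.single_apply, hj]
  · simp

lemma formPQ_eq_zero (p q : ℕ) (v : Fin (p + q) → ℝ)
    (h : ∀ y, formPQ p q v y = 0) : v = 0 := by
  funext i
  have := h (Pi.single i 1)
  rw [formPQ_single] at this
  by_cases hi : (i : ℕ) < p <;> simp [hi] at this <;> simpa using this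

lemma formPQ_add_left (p q : ℕ) (x x' y : Fin (p + q) → ℝ) :
    formPQ p q (x + x') y = formPQ p q x y + formPQ p q x' y := by
  unfold formPQ; rw [← Finset.sum_add_distrib]; apply Finset.sum_congr rfl
  intros; simp only [Pi.add_apply]; split_ifs <;> ring

lemma formPQ_smul_left (p q : ℕ) (c : ℝ) (x y : Fin (p + q) → ℝ) :
    formPQ p q (c • x) y = c * formPQ p q x y := by
  unfold formPQ; rw [Finset.mul_sum]; apply Finset.sum_congr rfl
  intros; simp only [Pi.smul_apply, smul_eq_mul]; split_ifs <;> ring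

lemma formPQ_zero_right (p q : ℕ) (x : Fin (p + q) → ℝ) : formPQ p q x 0 = 0 := by
  simp [formPQ]

/-- `formPQ` composed with `A` in the first slot, as a bilinear map. -/
noncomputable def formB (p q : ℕ) (A : (Fin (p + q) → ℝ) →ₗ[ℝ] (Fin (p + q) → ℝ)) :
    (Fin (p + q) → ℝ) →ₗ[ℝ] (Fin (p + q) → ℝ) →ₗ[ℝ] ℝ :=
  LinearMap.mk₂ ℝ (fun x y => formPQ p q (A x) y)
    (fun x x' y => by
      show formPQ p q (A (x + x')) y = formPQ p q (A x) y + formPQ p q (A x') y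
      rw [map_add, formPQ_add_left])
    (fun c x y => by
      show formPQ p q (A (c • x)) y = c • formPQ p q (A x) y
      rw [map_smul, formPQ_smul_left]; rfl)
    (fun x y y' => by
      show formPQ p q (A x) (y + y') = formPQ p q (A x) y + formPQ p q (A x) y'
      rw [formPQ_symm, formPQ_add_left, formPQ_symm p q y, formPQ_symm p q y'])
    (fun c x y => by
      show formPQ p q (A x) (c • y) = c • formPQ p q (A x) y
      rw [formPQ_symm, formPQ_smul_left, formPQ_symm]; rfl)

lemma formPQ_zero_left (p q : ℕ) (y : Fin (p + q) → ℝ) : formPQ p q 0 y = 0 := by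
  rw [formPQ_symm, formPQ_zero_right]




/-- Linear equivalence `ℝ × (Fin s → ℝ) ≃ₗ (Fin (s+1) → ℝ)` via `Fin.cons`. -/
noncomputable def finConsLEquiv (s : ℕ) : (ℝ × (Fin s → ℝ)) ≃ₗ[ℝ] (Fin (s + 1) → ℝ) where
  toFun p := Fin.cons p.1 p.2
  invFun f := (f 0, Fin.tail f)
  map_add' p q := by
    funext i
    refine Fin.cases ?_ (fun j => ?_) i <;> simp
  map_smul' c p := by
    funext i
    refine Fin.cases ?_ (fun j => ?_) i <;> simp
  left_inv p := by simp [Fin.tail_cons]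
  right_inv f := by simp [Fin.cons_self_tail]

/-- Assemble `ℝ × ℝ × ((Fin s → ℝ) × (Fin s → ℝ))` into `(Fin (s+1) → ℝ) × (Fin (s+1) → ℝ)`. -/
noncomputable def assembleEquiv (s : ℕ) :
    (ℝ × ℝ × ((Fin s → ℝ) × (Fin s → ℝ))) ≃ₗ[ℝ] ((Fin (s + 1) → ℝ) × (Fin (s + 1) → ℝ)) where
  toFun p := (Fin.cons p.1 p.2.2.1, Fin.cons p.2.1 p.2.2.2)
  invFun p := (p.1 0, p.2 0, Fin.tail p.1, Fin.tail p.2)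
  map_add' p q := by
    refine Prod.ext ?_ ?_ <;> (funext i; refine Fin.cases ?_ (fun j => ?_) i) <;> simp
  map_smul' c p := by
    refine Prod.ext ?_ ?_ <;> (funext i; refine Fin.cases ?_ (fun j => ?_) i) <;> simp
  left_inv p := by simp [Fin.tail_cons]
  right_inv p := by simp [Fin.cons_self_tail]

theorem sympBasis : ∀ n : ℕ, ∀ (V : Type) [AddCommGroup V] [Module ℝ V]
    [FiniteDimensional ℝ V], finrank ℝ V = n →
    ∀ B : V →ₗ[ℝ] V →ₗ[ℝ] ℝ, (∀ a b, B a b = - B b a) →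
    (∀ v, (∀ w, B v w = 0) → v = 0) →
    ∃ s, n = 2 * s ∧ ∃ φ : V ≃ₗ[ℝ] ((Fin s → ℝ) × (Fin s → ℝ)),
      ∀ a b, B a b = ∑ i, ((φ a).1 i * (φ b).2 i - (φ b).1 i * (φ a).2 i) := by
  intro n
  induction n using Nat.strong_induction_on with
  | _ n ih =>
    intro V _ _ _ hrank B hskew hnd
    have hBalt : ∀ a : V, B a a = 0 := by
      intro a; have := hskew a a; linarith
    rcases Nat.eq_zero_or_pos n with hn | hn
    · -- trivial case
      subst hn
      have : Subsingleton V := by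
        rw [← finrank_zero_iff (R := ℝ)]; omega
      refine ⟨0, by ring, LinearEquiv.ofLinear 0 0 ?_ ?_, ?_⟩
      · exact Subsingleton.elim _ _
      · exact Subsingleton.elim _ _
      · intro a b
        have ha : a = 0 := Subsingleton.elim _ _
        simp [ha]
    · -- V nontrivial
      have : Nontrivial V := Module.nontrivial_of_finrank_pos (R := ℝ) (by omega)
      obtain ⟨x, hx⟩ := exists_ne (0 : V)
      have hy' : ∃ y', B x y' ≠ 0 := by
        by_contra h; push_neg at h; exact hx (hnd x h)
      obtain ⟨y', hy'⟩ := hy'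
      set y : V := (B x y')⁻¹ • y' with hydef
      have hxy : B x y = 1 := by
        simp [hydef, map_smul, smul_eq_mul, inv_mul_cancel₀ hy']
      have hyx : B y x = -1 := by rw [hskew, hxy]
      set W : Submodule ℝ V := LinearMap.ker (B x) ⊓ LinearMap.ker (B y) with hWdef
      set P : V →ₗ[ℝ] V :=
        LinearMap.id - (B x).smulRight y + (B y).smulRight x with hPdef
      have hPapp : ∀ v, P v = v - (B x v) • y + (B y v) • x := fun v => rfl
      have hPmem : ∀ v, P v ∈ W := by
        intro v
        refine Submodule.mem_inf.mpr ⟨?_, ?_⟩ <;>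
          simp only [LinearMap.mem_ker, hPapp, map_sub, map_add, map_smul, smul_eq_mul,
            hxy, hyx, hBalt] <;> ring
      have hBxW : ∀ w : W, B x (w : V) = 0 := fun w => (Submodule.mem_inf.mp w.2).1
      have hByW : ∀ w : W, B y (w : V) = 0 := fun w => (Submodule.mem_inf.mp w.2).2
      set F : V →ₗ[ℝ] ℝ × ℝ × W :=
        (B x).prod ((B y).prod (P.codRestrict W hPmem)) with hFdef
      set G : (ℝ × ℝ × W) →ₗ[ℝ] V :=
        (LinearMap.toSpanSingleton ℝ V y).coprod
          ((LinearMap.toSpanSingleton ℝ V (-x)).coprod W.subtype) with hGdef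
      have hGapp : ∀ t : ℝ × ℝ × W, G t = t.1 • y + (t.2.1 • (-x) + (t.2.2 : V)) :=
        fun t => rfl
      have hFG : F ∘ₗ G = LinearMap.id := by
        apply LinearMap.ext
        rintro ⟨a, b, w⟩
        have h1 : B x (G (a, b, w)) = a := by
          simp [hGapp, map_add, map_smul, smul_eq_mul, hxy, hBalt, hBxW]
        have h2 : B y (G (a, b, w)) = b := by
          simp [hGapp, map_add, map_smul, smul_eq_mul, hyx, hBalt, hByW]
        have h3 : P (G (a, b, w)) = (w : V) := by
          rw [hPapp, h1, h2, hGapp]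
          module
        refine Prod.ext ?_ (Prod.ext ?_ ?_)
        · simpa [hFdef] using h1
        · simpa [hFdef] using h2
        · exact Subtype.ext (by simpa [hFdef, LinearMap.codRestrict_apply] using h3)
      have hGF : G ∘ₗ F = LinearMap.id := by
        apply LinearMap.ext
        intro v
        show G (F v) = v
        have : F v = (B x v, B y v, ⟨P v, hPmem v⟩) := rfl
        rw [this, hGapp]
        simp only [hPapp]
        module
      set E : V ≃ₗ[ℝ] ℝ × ℝ × W := LinearEquiv.ofLinear F G hFG hGF with hEdef
      have hrkW : n = 2 + finrank ℝ W := by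
        have h := E.finrank_eq
        rw [hrank] at h
        rw [h, Module.finrank_prod, Module.finrank_prod, Module.finrank_self]; omega
      have hlt : finrank ℝ W < n := by omega
      set B' : W →ₗ[ℝ] W →ₗ[ℝ] ℝ := (B.domRestrict W).compl₂ W.subtype with hB'def
      have hB'app : ∀ w w' : W, B' w w' = B (w : V) (w' : V) := fun w w' => rfl
      have hskew' : ∀ a b : W, B' a b = - B' b a := by
        intro a b; rw [hB'app, hB'app]; exact hskew _ _
      have hnd' : ∀ w : W, (∀ w' : W, B' w w' = 0) → w = 0 := by
        intro w hw
        have hwV : ∀ v : V, B (w : V) v = 0 := by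
          intro v
          have hv : v = G (F v) := by
            have := congrArg (fun (f : V →ₗ[ℝ] V) => f v) hGF
            simpa using this.symm
          rw [hv]
          have : F v = (B x v, B y v, ⟨P v, hPmem v⟩) := rfl
          rw [this, hGapp]
          have hwy : B (w : V) y = 0 := by rw [hskew]; simp [hByW w]
          have hwx : B (w : V) x = 0 := by rw [hskew]; simp [hBxW w]
          have hwP : B (w : V) (P v) = 0 := hw ⟨P v, hPmem v⟩
          simp [map_add, map_smul, smul_eq_mul, hwy, hwx, hwP]
        exact Subtype.ext (hnd _ hwV)
      obtain ⟨s', hs', φ', hφ'⟩ := ih (finrank ℝ W) hlt W rfl B' hskew' hnd'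
      refine ⟨s' + 1, by omega, ?_⟩
      set step : (ℝ × ℝ × W) ≃ₗ[ℝ] (ℝ × ℝ × ((Fin s' → ℝ) × (Fin s' → ℝ))) :=
        (LinearEquiv.refl ℝ ℝ).prodCongr ((LinearEquiv.refl ℝ ℝ).prodCongr φ') with hstep
      set φ : V ≃ₗ[ℝ] ((Fin (s' + 1) → ℝ) × (Fin (s' + 1) → ℝ)) :=
        E.trans (step.trans (assembleEquiv s')) with hφdef
      refine ⟨φ, ?_⟩
      intro a b
      have hφapp : ∀ v : V, φ v =
          (Fin.cons (B x v) ((φ' ⟨P v, hPmem v⟩).1),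
           Fin.cons (B y v) ((φ' ⟨P v, hPmem v⟩).2)) := fun v => rfl
      have key : B (P a) (P b) = B a b - B x a * B y b + B x b * B y a := by
        rw [hPapp, hPapp]
        simp only [map_sub, map_add, map_smul, LinearMap.sub_apply, LinearMap.add_apply,
          LinearMap.smul_apply, smul_eq_mul, hBalt, hxy, hyx]
        rw [hskew a y, hskew a x]
        ring
      rw [hφapp, hφapp]
      rw [Fin.sum_univ_succ]
      simp only [Fin.cons_zero, Fin.cons_succ]
      rw [← hφ']
      rw [hB'app, key]
      ring

/-- The Lie algebra `G(ℝ^{p,q})` is 2-step nilpotent, its center is `ℝ·z ⊕ ker A`,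
and if `A` is nonsingular it is isomorphic to the Heisenberg Lie algebra `h_{2s+1}`
with `2s = p + q`. -/
theorem G_Rpq_two_step_nilpotent_and_heisenberg
    (p q : ℕ) (A : (Fin (p + q) → ℝ) →ₗ[ℝ] (Fin (p + q) → ℝ))
    (hA : A ≠ 0)
    (hAskew : ∀ x y : Fin (p + q) → ℝ, formPQ p q (A x) y = - formPQ p q x (A y)) :
    -- 2-step nilpotent: [n,n] ≠ 0 and [n,[n,n]] = 0
    (∃ u v : (Fin (p + q) → ℝ) × ℝ, nbr p q A u v ≠ 0) ∧
    (∀ u v w : (Fin (p + q) → ℝ) × ℝ, nbr p q A u (nbr p q A v w) = 0) ∧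
    -- the center equals ℝ·z ⊕ ker A
    (∀ u : (Fin (p + q) → ℝ) × ℝ,
      (∀ v : (Fin (p + q) → ℝ) × ℝ, nbr p q A u v = 0 ∧ nbr p q A v u = 0) ↔ A u.1 = 0) ∧
    -- if A is nonsingular then n ≅ h_{2s+1} with 2s = p + q
    (Function.Bijective A →
      ∃ s : ℕ, p + q = 2 * s ∧
        ∃ e : ((Fin (p + q) → ℝ) × ℝ) ≃ₗ[ℝ] ((Fin s → ℝ) × (Fin s → ℝ) × ℝ),
          ∀ u v : (Fin (p + q) → ℝ) × ℝ,
            e (nbr p q A u v) = heisBr s (e u) (e v)) := by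
  refine ⟨?_, ?_, ?_, ?_⟩
  · -- [n,n] ≠ 0
    obtain ⟨x, hx⟩ : ∃ x, A x ≠ 0 := by
      by_contra h; push_neg at h; exact hA (LinearMap.ext h)
    obtain ⟨i, hi⟩ : ∃ i, A x i ≠ 0 := by
      by_contra h; push_neg at h; exact hx (funext h)
    refine ⟨(x, 0), (Pi.single i 1, 0), fun h => ?_⟩
    have h2 := congrArg Prod.snd h
    rw [nbr] at h2
    simp only [formPQ_single] at h2
    by_cases hip : (i : ℕ) < p <;> simp [hip] at h2 <;> exact hi (by linarith)
  · -- 2-step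
    intro u v w
    simp [nbr, formPQ_zero_right]
  · -- center
    intro u
    constructor
    · intro h
      apply formPQ_eq_zero
      intro y
      have := (h (y, 0)).1
      have h2 := congrArg Prod.snd this
      simpa [nbr] using h2
    · intro hAu v
      constructor
      · simp [nbr, hAu, formPQ_zero_left]
      · have : formPQ p q (A v.1) u.1 = 0 := by
          rw [hAskew, hAu, formPQ_zero_right, neg_zero]
        simp [nbr, this]
  · -- Heisenberg
    intro hbij
    obtain ⟨s, hs, φ, hφ⟩ := sympBasis (p + q) (Fin (p + q) → ℝ)
      (Module.finrank_fin_fun ℝ) (formB p q A)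
      (fun a b => by
        show formPQ p q (A a) b = - formPQ p q (A b) a
        rw [hAskew, formPQ_symm])
      (fun v hv => by
        have hAv : A v = 0 := formPQ_eq_zero p q (A v) hv
        exact hbij.1 (by rw [hAv, map_zero])
      )
    refine ⟨s, hs, (φ.prodCongr (LinearEquiv.refl ℝ ℝ)).trans
      (LinearEquiv.prodAssoc ℝ (Fin s → ℝ) (Fin s → ℝ) ℝ), ?_⟩
    intro u v
    have happ : ∀ w : (Fin (p + q) → ℝ) × ℝ,
        ((φ.prodCongr (LinearEquiv.refl ℝ ℝ)).trans
          (LinearEquiv.prodAssoc ℝ (Fin s → ℝ) (Fin s → ℝ) ℝ)) w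
        = ((φ w.1).1, (φ w.1).2, w.2) := fun w => rfl
    rw [happ, happ, happ]
    show ((φ (0 : Fin (p+q) → ℝ)).1, (φ (0 : Fin (p+q) → ℝ)).2, formPQ p q (A u.1) v.1) = _
    rw [map_zero]
    have : formPQ p q (A u.1) v.1 = formB p q A u.1 v.1 := rfl
    rw [this, hφ]
    simp [heisBr]
end

section
/- Write D^0(a) = a, D^i(a) = [a, D^{i-1}(a)] for the lower central series of a Lie algebra a. Then: (i) for every i ≥ 1, D^i(G(d)) ⊆ D^i(d) ⊕ h*; (ii) if d is nilpotent with D^k(d) = 0, then D^{k+1}(G(d)) = 0, so G(d) is nilpotent of step at most k+1; (iii) under the hypothesis D^k(d) = 0, one has D^k(G(d)) = 0 if and only if D^{k-1}(d) ⊆ ∩_{h∈h} ker π(h), i.e. π(h)x = 0 for all h ∈ h and x ∈ D^{k-1}(d). -/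
open Module

variable {H D : Type} [LieRing H] [LieAlgebra ℝ H] [FiniteDimensional ℝ H]
  [LieRing D] [LieAlgebra ℝ D] [FiniteDimensional ℝ D]

/-- The subspace spanned by all brackets `br u v`, `u ∈ S`, `v ∈ T`. -/
def bspan {X : Type} [AddCommGroup X] [Module ℝ X] (br : X → X → X)
    (S T : Submodule ℝ X) : Submodule ℝ X :=
  Submodule.span ℝ {z | ∃ u ∈ S, ∃ v ∈ T, z = br u v}

/-- The lower central series: `D⁰(a) = a`, `Dⁱ(a) = [a, Dⁱ⁻¹(a)]`. -/
def lcsF {X : Type} [AddCommGroup X] [Module ℝ X] (br : X → X → X) : ℕ → Submodule ℝ X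
  | 0 => ⊤
  | (i + 1) => bspan br ⊤ (lcsF br i)

lemma lcs_le_prod (BD : LinearMap.BilinForm ℝ D) (π : H →ₗ[ℝ] D →ₗ[ℝ] D) :
    ∀ j : ℕ, lcsF (gbr BD π) j ≤
      (lcsF (fun x y : D => ⁅x, y⁆) j).prod (⊤ : Submodule ℝ (Dual ℝ H))
  | 0 => by simp [lcsF]
  | (j + 1) => by
    rw [lcsF, lcsF, bspan]
    apply Submodule.span_le.2
    rintro z ⟨u, -, v, hv, rfl⟩
    have hv1 : v.1 ∈ lcsF (fun x y : D => ⁅x, y⁆) j := (lcs_le_prod BD π j hv).1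
    exact ⟨Submodule.subset_span ⟨u.1, trivial, v.1, hv1, rfl⟩, trivial⟩

lemma lcs_ge_fst (BD : LinearMap.BilinForm ℝ D) (π : H →ₗ[ℝ] D →ₗ[ℝ] D) :
    ∀ j : ℕ, lcsF (fun x y : D => ⁅x, y⁆) j ≤
      (lcsF (gbr BD π) j).map (LinearMap.fst ℝ D (Dual ℝ H))
  | 0 => fun x _ => ⟨(x, 0), trivial, rfl⟩
  | (j + 1) => by
    rw [lcsF, lcsF, bspan, bspan]
    apply Submodule.span_le.2
    rintro z ⟨u, -, v, hv, rfl⟩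
    obtain ⟨v', hv', hv1⟩ := lcs_ge_fst BD π j hv
    refine ⟨gbr BD π (u, 0) v', Submodule.subset_span ⟨(u, 0), trivial, v', hv', rfl⟩, ?_⟩
    have hv1' : v'.1 = v := hv1
    simp only [gbr, LinearMap.fst_apply, hv1']

/-- Nilpotency of `G(d)`: `Dⁱ(G(d)) ⊆ Dⁱ(d) ⊕ h*`; if `d` is `k`-step nilpotent then
`G(d)` is at most `(k+1)`-step nilpotent, and it is `k`-step nilpotent iff
`D^{k-1}(d) ⊆ ∩_{h} ker π(h)`. -/
theorem Gd_nilpotency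
    (BH : LinearMap.BilinForm ℝ H)
    (hBHsymm : ∀ a b : H, BH a b = BH b a)
    (hBHnd : BH.Nondegenerate)
    (hBHinv : ∀ a b c : H, BH ⁅a, b⁆ c = - BH b ⁅a, c⁆)
    (BD : LinearMap.BilinForm ℝ D)
    (hBDsymm : ∀ x y : D, BD x y = BD y x)
    (hBDnd : BD.Nondegenerate)
    (hBDinv : ∀ x y z : D, BD ⁅x, y⁆ z = - BD y ⁅x, z⁆)
    (π : H →ₗ[ℝ] D →ₗ[ℝ] D)
    (hπder : ∀ a : H, ∀ x y : D, π a ⁅x, y⁆ = ⁅π a x, y⁆ + ⁅x, π a y⁆)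
    (hπhom : ∀ a b : H, π ⁅a, b⁆ = π a ∘ₗ π b - π b ∘ₗ π a)
    (hπskew : ∀ a : H, ∀ x y : D, BD (π a x) y = - BD x (π a y)) :
    -- (i) Dⁱ(G(d)) ⊆ Dⁱ(d) ⊕ h* for i ≥ 1
    (∀ i : ℕ, 1 ≤ i →
      lcsF (gbr BD π) i ≤ (lcsF (fun x y : D => ⁅x, y⁆) i).prod (⊤ : Submodule ℝ (Dual ℝ H))) ∧
    -- (ii) if Dᵏ(d) = 0 then D^{k+1}(G(d)) = 0
    (∀ k : ℕ, lcsF (fun x y : D => ⁅x, y⁆) k = ⊥ → lcsF (gbr BD π) (k + 1) = ⊥) ∧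
    -- (iii) if Dᵏ(d) = 0 (k ≥ 1) then Dᵏ(G(d)) = 0 ↔ D^{k-1}(d) ⊆ ∩_h ker π(h)
    (∀ k : ℕ, 1 ≤ k → lcsF (fun x y : D => ⁅x, y⁆) k = ⊥ →
      (lcsF (gbr BD π) k = ⊥ ↔
        ∀ a : H, ∀ x ∈ lcsF (fun x y : D => ⁅x, y⁆) (k - 1), π a x = 0)) := by

  refine ⟨fun i _ => lcs_le_prod BD π i, ?_, ?_⟩
  · -- (ii)
    intro k hk
    rw [eq_bot_iff, lcsF, bspan]
    apply Submodule.span_le.2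
    rintro z ⟨u, -, v, hv, rfl⟩
    have hv1 : v.1 ∈ lcsF (fun x y : D => ⁅x, y⁆) k := (lcs_le_prod BD π k hv).1
    rw [hk, Submodule.mem_bot] at hv1
    have hb : beta BD π u.1 (0 : D) = 0 := by
      ext a; simp [beta]
    simp [gbr, hv1, hb, Prod.ext_iff]
  · -- (iii)
    rintro k hk1 hk
    obtain ⟨m, rfl⟩ : ∃ m, k = m + 1 := ⟨k - 1, (Nat.succ_pred_eq_of_pos hk1).symm⟩
    simp only [Nat.add_sub_cancel]
    constructor
    · intro h0 a x hx
      obtain ⟨v, hv, hv1⟩ := lcs_ge_fst BD π m hx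
      have hBx : ∀ w : D, BD w (π a x) = 0 := by
        intro w
        have hz : gbr BD π (w, 0) v ∈ lcsF (gbr BD π) (m + 1) := by
          rw [lcsF, bspan]
          exact Submodule.subset_span ⟨(w, 0), trivial, v, hv, rfl⟩
        rw [h0, Submodule.mem_bot] at hz
        have hb : beta BD π w v.1 = 0 := by
          have := congrArg Prod.snd hz; simpa [gbr] using this
        have hba : beta BD π w v.1 a = 0 := by rw [hb]; rfl
        have : BD (π a w) v.1 = 0 := hba
        have hv1' : v.1 = x := hv1
        rw [hv1'] at this
        rw [hπskew a w x] at this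
        linarith
      have : BD (π a x) = 0 := by
        ext w
        rw [hBDsymm]
        exact hBx w
      exact hBDnd.1 _ (fun w => by rw [this]; rfl)
    · intro h0
      rw [eq_bot_iff, lcsF, bspan]
      apply Submodule.span_le.2
      rintro z ⟨u, -, v, hv, rfl⟩
      have hv1 : v.1 ∈ lcsF (fun x y : D => ⁅x, y⁆) m := (lcs_le_prod BD π m hv).1
      have hbr : ⁅u.1, v.1⁆ = 0 := by
        have : ⁅u.1, v.1⁆ ∈ lcsF (fun x y : D => ⁅x, y⁆) (m + 1) := by
          rw [lcsF, bspan]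
          exact Submodule.subset_span ⟨u.1, trivial, v.1, hv1, rfl⟩
        rwa [hk, Submodule.mem_bot] at this
      have hb : beta BD π u.1 v.1 = 0 := by
        ext a
        have : beta BD π u.1 v.1 a = BD (π a u.1) v.1 := rfl
        rw [this, hπskew, h0 a v.1 hv1]
        simp
      simp [gbr, hbr, hb, Prod.ext_iff]
end
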